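/- arXiv:1602.02589 — 4 statements merged into one kernel-verified Lean document; each statement's English description precedes it below -/
import Mathlib

section
/- If a graph G is f-AT for a function f from V(G) to the natural numbers, then G is f-choosable. -/
open scoped Classical

namespace ATPaper

variable {V : Type*}

/-- Out-degree of `v` in the digraph given by the arc set `A`. -/
noncomputable def outDeg (A : Finset (V × V)) (v : V) : ℕ :=
  (A.filter fun e => e.1 = v).card

/-- In-degree of `v` in the digraph given by the arc set `A`. -/
noncomputable def inDeg (A : Finset (V × V)) (v : V) : ℕ :=
  (A.filter fun e => e.2 = v).card

/-- `A` is an orientation of the simple graph `G`: every edge of `G` gets exactly one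
direction, and every arc of `A` comes from an edge of `G`. -/
def IsOrientation (G : SimpleGraph V) (A : Finset (V × V)) : Prop :=
  (∀ u v : V, G.Adj u v ↔ ((u, v) ∈ A ∨ (v, u) ∈ A)) ∧
    ∀ u v : V, (u, v) ∈ A → (v, u) ∉ A

/-- Number of spanning eulerian subdigraphs of `A` with an even number of arcs. -/
noncomputable def EE (A : Finset (V × V)) : ℕ :=
  (A.powerset.filter fun B => (∀ v, outDeg B v = inDeg B v) ∧ Even B.card).card

/-- Number of spanning eulerian subdigraphs of `A` with an odd number of arcs. -/
noncomputable def EO (A : Finset (V × V)) : ℕ :=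
  (A.powerset.filter fun B => (∀ v, outDeg B v = inDeg B v) ∧ ¬ Even B.card).card

/-- `G` is `f`-Alon–Tarsi. -/
def IsfAT (G : SimpleGraph V) (f : V → ℕ) : Prop :=
  ∃ A : Finset (V × V), IsOrientation G A ∧ EE A ≠ EO A ∧ ∀ v, outDeg A v + 1 ≤ f v

/-- The Alon–Tarsi number of `G`. -/
noncomputable def AT (G : SimpleGraph V) : ℕ := sInf {k : ℕ | IsfAT G fun _ => k}

/-- `G` is `k`-AT-critical. -/
def ATCritical (G : SimpleGraph V) (k : ℕ) : Prop :=
  AT G = k ∧ ∀ H : SimpleGraph V, H < G → AT H < k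

/-- The average degree `2‖G‖/|G|` of `G`. -/
noncomputable def avgDeg (G : SimpleGraph V) : ℝ :=
  2 * (Nat.card G.edgeSet : ℝ) / (Nat.card V : ℝ)

/-- `G` is (isomorphic to) the complete graph `K_k`. -/
def IsCompleteK (G : SimpleGraph V) (k : ℕ) : Prop :=
  Nonempty (G ≃g (⊤ : SimpleGraph (Fin k)))

/-- The induced subgraph of `G` on `B` has no cut vertex. -/
def NoCutVtx (G : SimpleGraph V) (B : Set V) : Prop :=
  ∀ v ∈ B, (G.induce (B \ {v})).Preconnected

/-- `B` is (the vertex set of) a block of `G`: a maximal connected subgraph without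
a cut vertex. -/
def IsBlockSet (G : SimpleGraph V) (B : Set V) : Prop :=
  (G.induce B).Connected ∧ NoCutVtx G B ∧
    ∀ C : Set V, B ⊆ C → (G.induce C).Connected → NoCutVtx G C → C = B

/-- The induced subgraph of `G` on `B` is an odd cycle (connected, 2-regular,
odd order at least 3). -/
def IsOddCycleSet (G : SimpleGraph V) (B : Set V) : Prop :=
  (G.induce B).Connected ∧ Odd (Nat.card B) ∧ 3 ≤ Nat.card B ∧
    ∀ v ∈ B, Nat.card {u : V | u ∈ B ∧ G.Adj v u} = 2

/-- `G` is a Gallai tree: connected, and every block is a complete graph or an odd cycle. -/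
def IsGallaiTree (G : SimpleGraph V) : Prop :=
  G.Connected ∧ ∀ B : Set V, IsBlockSet G B → G.IsClique B ∨ IsOddCycleSet G B

/-- `G ∈ 𝒯_k`: `G` is a Gallai tree with maximum degree at most `k-1`, and `G ≠ K_k`. -/
def MemTk (G : SimpleGraph V) (k : ℕ) : Prop :=
  IsGallaiTree G ∧ (∀ v : V, Nat.card (G.neighborSet v) ≤ k - 1) ∧ ¬ IsCompleteK G k

/-- `G` contains a copy of `K_n`. -/
def HasClique (G : SimpleGraph V) (n : ℕ) : Prop := ∃ S : Finset V, G.IsNClique n S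

/-- `W^k(G)`: the set of vertices of `G` contained in some copy of `K_{k-1}`. -/
def Wk (G : SimpleGraph V) (k : ℕ) : Set V :=
  {v | ∃ S : Finset V, G.IsNClique (k - 1) S ∧ v ∈ S}

/-- `q(G)`: the number of non-cut vertices of `G` lying in some copy of `K_{k-1}`. -/
noncomputable def qT (G : SimpleGraph V) (k : ℕ) : ℕ :=
  Nat.card {v : V | v ∈ Wk G k ∧ (G.induce {v}ᶜ).Preconnected}

/-- The vertices of `S` lying in `W^k` of the induced subgraph of `G` on `S`. -/
def WkIn (G : SimpleGraph V) (k : ℕ) (S : Set V) : Set V :=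
  {v | ∃ hv : v ∈ S, (⟨v, hv⟩ : S) ∈ Wk (G.induce S) k}

/-- `S` is (the vertex set of) a connected component of the induced subgraph of `G` on `X`. -/
def IsComponentOf (G : SimpleGraph V) (X S : Set V) : Prop :=
  S ⊆ X ∧ (G.induce S).Connected ∧ ∀ u ∈ S, ∀ v ∈ X, G.Adj u v → v ∈ S

/-- `G` is `f`-choosable. -/
def Choosable (G : SimpleGraph V) (f : V → ℕ) : Prop :=
  ∀ L : V → Finset ℕ, (∀ v, (L v).card = f v) →
    ∃ φ : V → ℕ, (∀ v, φ v ∈ L v) ∧ ∀ ⦃u v : V⦄, G.Adj u v → φ u ≠ φ v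

/-- `G` is `k`-list-critical: `G` is not `(k-1)`-choosable, but every proper subgraph is. -/
def ListCritical (G : SimpleGraph V) (k : ℕ) : Prop :=
  ¬ Choosable G (fun _ => k - 1) ∧ ∀ H : SimpleGraph V, H < G → Choosable H (fun _ => k - 1)

end ATPaper

set_option linter.unusedSectionVars false
set_option maxHeartbeats 1000000

namespace ATHelp

open Finset MvPolynomial

lemma coeff_interpolate (S : Finset ℚ) (r : ℚ → ℚ) :
    (Lagrange.interpolate S id r).coeff (S.card - 1) =
      ∑ x ∈ S, Lagrange.nodalWeight S id x * r x := by
  rw [Lagrange.interpolate_apply, Polynomial.finset_sum_coeff]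
  refine Finset.sum_congr rfl fun i hi => ?_
  have hb : Lagrange.basis S id i =
      Polynomial.C (Lagrange.nodalWeight S id i) * Lagrange.nodal (S.erase i) id := by
    rw [Lagrange.basis_eq_prod_sub_inv_mul_nodal_div hi, Lagrange.nodal_erase_eq_nodal_div hi]
  have hmon : (Lagrange.nodal (S.erase i) id).Monic := Lagrange.nodal_monic
  have hdeg : (Lagrange.nodal (S.erase i) id).natDegree = S.card - 1 := by
    rw [Lagrange.natDegree_nodal, Finset.card_erase_of_mem hi]
  rw [hb, Polynomial.coeff_C_mul, Polynomial.coeff_C_mul, ← hdeg, hmon.coeff_natDegree]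
  ring

lemma powsum (S : Finset ℚ) (m : ℕ) (hm : m < S.card) :
    ∑ x ∈ S, Lagrange.nodalWeight S id x * x ^ m = if m = S.card - 1 then 1 else 0 := by
  have hinj : Set.InjOn (id : ℚ → ℚ) S := Set.injOn_id _
  have hdeg : ((Polynomial.X : Polynomial ℚ) ^ m).degree < S.card := by
    rw [Polynomial.degree_X_pow]
    exact_mod_cast hm
  have h := Lagrange.eq_interpolate hinj hdeg
  have h2 := congrArg (fun p => Polynomial.coeff p (S.card - 1)) h
  simp only [Polynomial.coeff_X_pow] at h2
  rw [coeff_interpolate] at h2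
  simp only [id_eq, Polynomial.eval_pow, Polynomial.eval_X] at h2
  rw [← h2]
  by_cases hc : m = S.card - 1
  · simp [hc]
  · simp [hc, Ne.symm hc]

variable {V : Type*} [Fintype V]

lemma coeff_formula (t : V → ℕ) (S : V → Finset ℚ) (hcard : ∀ v, (S v).card = t v + 1)
    (P : MvPolynomial V ℚ) (hdeg : P.totalDegree ≤ ∑ v, t v) :
    MvPolynomial.coeff (Finsupp.equivFunOnFinite.symm t) P =
      ∑ x ∈ Fintype.piFinset S,
        (∏ v, Lagrange.nodalWeight (S v) id (x v)) * MvPolynomial.eval x P := by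
  classical
  conv_lhs => rw [P.as_sum]
  conv_rhs => rw [P.as_sum]
  rw [MvPolynomial.coeff_sum]
  have : ∀ x, (∏ v, Lagrange.nodalWeight (S v) id (x v)) *
      MvPolynomial.eval x (∑ m ∈ P.support, monomial m (coeff m P)) =
      ∑ m ∈ P.support, (∏ v, Lagrange.nodalWeight (S v) id (x v)) *
        MvPolynomial.eval x (monomial m (coeff m P)) := by
    intro x; rw [map_sum, Finset.mul_sum]
  simp only [this]
  rw [Finset.sum_comm]
  refine Finset.sum_congr rfl fun m hm => ?_
  -- degree bound for m
  have hmd : ∑ v, m v ≤ ∑ v, t v := by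
    refine le_trans ?_ hdeg
    have := MvPolynomial.le_totalDegree hm
    rwa [Finsupp.sum_fintype _ _ (fun _ => rfl)] at this
  -- RHS for monomial
  have heval : ∀ x : V → ℚ, MvPolynomial.eval x (monomial m (coeff m P)) =
      coeff m P * ∏ v, x v ^ m v := by
    intro x
    rw [MvPolynomial.eval_monomial]
    congr 1
    exact Finsupp.prod_fintype _ _ (fun v => pow_zero (x v))
  simp only [heval]
  have hswap : ∑ x ∈ Fintype.piFinset S,
      (∏ v, Lagrange.nodalWeight (S v) id (x v)) * (coeff m P * ∏ v, x v ^ m v) =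
      coeff m P * ∏ v, ∑ z ∈ S v, Lagrange.nodalWeight (S v) id z * z ^ m v := by
    rw [Finset.prod_univ_sum]
    rw [Finset.mul_sum]
    refine Finset.sum_congr rfl fun x hx => ?_
    rw [Finset.prod_mul_distrib]
    ring
  rw [hswap, MvPolynomial.coeff_monomial]
  by_cases hmt : m = Finsupp.equivFunOnFinite.symm t
  · have hmv : ∀ v, m v = t v := by
      intro v
      have := congrArg (fun g => g v) hmt
      simpa using this
    rw [if_pos hmt]
    have h1 : ∀ v, ∑ z ∈ S v, Lagrange.nodalWeight (S v) id z * z ^ m v = 1 := by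
      intro v
      rw [powsum _ _ (by rw [hcard v, hmv v]; omega)]
      rw [hcard v, hmv v]
      simp
    rw [Finset.prod_congr rfl fun v _ => h1 v]
    simp
  · rw [if_neg hmt]
    have hne : ∃ u, m u < t u := by
      by_contra hno
      push_neg at hno
      -- ∀ u, t u ≤ m u ; and m ≠ t so some strict, contradicting hmd
      have hex : ∃ u, t u < m u := by
        by_contra hno2
        push_neg at hno2
        apply hmt
        ext v
        simp only [Finsupp.coe_equivFunOnFinite_symm]
        exact le_antisymm (hno2 v) (hno v)
      obtain ⟨u, hu⟩ := hex
      have : ∑ v, t v < ∑ v, m v :=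
        Finset.sum_lt_sum (fun v _ => hno v) ⟨u, Finset.mem_univ u, hu⟩
      omega
    obtain ⟨u, hu⟩ := hne
    have : ∑ z ∈ S u, Lagrange.nodalWeight (S u) id z * z ^ m u = 0 := by
      rw [powsum _ _ (by rw [hcard u]; omega)]
      rw [hcard u]
      simp only [Nat.add_sub_cancel]
      rw [if_neg (by omega)]
    rw [Finset.prod_eq_zero (Finset.mem_univ u) this]
    simp
lemma cn (t : V → ℕ) (P : MvPolynomial V ℚ)
    (hc : MvPolynomial.coeff (Finsupp.equivFunOnFinite.symm t) P ≠ 0)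
    (hdeg : P.totalDegree ≤ ∑ v, t v)
    (L : V → Finset ℚ) (hL : ∀ v, t v + 1 ≤ (L v).card) :
    ∃ x : V → ℚ, (∀ v, x v ∈ L v) ∧ MvPolynomial.eval x P ≠ 0 := by
  classical
  have hS : ∀ v, ∃ s ⊆ L v, s.card = t v + 1 := fun v =>
    Finset.exists_subset_card_eq (hL v)
  choose S hSL hScard using hS
  by_contra h
  push_neg at h
  have hz : ∀ x ∈ Fintype.piFinset S, MvPolynomial.eval x P = 0 := fun x hx =>
    h x (fun v => hSL v (Fintype.mem_piFinset.mp hx v))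
  have hcf := coeff_formula t S hScard P hdeg
  rw [Finset.sum_eq_zero (fun x hx => by rw [hz x hx, mul_zero])] at hcf
  exact hc hcf

lemma prod_X_eq {ι : Type*} (s : Finset ι) (g : ι → V) :
    (∏ a ∈ s, (X (g a) : MvPolynomial V ℚ)) =
      monomial (∑ a ∈ s, Finsupp.single (g a) 1) 1 := by
  classical
  induction s using Finset.cons_induction with
  | empty => simp [MvPolynomial.monomial_zero']
  | cons a s ha ih =>
    rw [Finset.prod_cons, ih, Finset.sum_cons, MvPolynomial.X,
      MvPolynomial.monomial_mul, one_mul]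

lemma prod_negX_eq {ι : Type*} (s : Finset ι) (g : ι → V) :
    (∏ a ∈ s, (-X (g a) : MvPolynomial V ℚ)) =
      monomial (∑ a ∈ s, Finsupp.single (g a) 1) ((-1) ^ s.card) := by
  classical
  have : (∏ a ∈ s, (-X (g a) : MvPolynomial V ℚ)) =
      (-1) ^ s.card * ∏ a ∈ s, (X (g a) : MvPolynomial V ℚ) := by
    rw [← Finset.prod_const, ← Finset.prod_mul_distrib]
    exact Finset.prod_congr rfl fun a _ => by ring
  rw [this, prod_X_eq]
  rw [show ((-1 : MvPolynomial V ℚ) ^ s.card) = C ((-1 : ℚ) ^ s.card) by simp]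
  rw [MvPolynomial.C_mul_monomial, mul_one]

lemma sum_single_apply {ι : Type*} (s : Finset ι) (g : ι → V) (v : V) :
    (∑ a ∈ s, Finsupp.single (g a) (1 : ℕ)) v = (s.filter fun a => g a = v).card := by
  classical
  rw [Finset.card_filter, Finsupp.finset_sum_apply]
  exact Finset.sum_congr rfl fun a _ => Finsupp.single_apply

lemma coeff_graphPoly (A : Finset (V × V)) :
    MvPolynomial.coeff (Finsupp.equivFunOnFinite.symm fun v => ATPaper.outDeg A v)
      (∏ a ∈ A, (X a.1 - X a.2 : MvPolynomial V ℚ)) =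
      (ATPaper.EE A : ℚ) - (ATPaper.EO A : ℚ) := by
  classical
  have expand : (∏ a ∈ A, (X a.1 - X a.2 : MvPolynomial V ℚ)) =
      ∑ T ∈ A.powerset,
        monomial ((∑ a ∈ T, Finsupp.single a.1 1) + ∑ a ∈ A \ T, Finsupp.single a.2 1)
          ((-1 : ℚ) ^ ((A \ T).card)) := by
    have h1 : ∀ a : V × V, (X a.1 - X a.2 : MvPolynomial V ℚ) = X a.1 + (-X a.2) :=
      fun a => by ring
    rw [Finset.prod_congr rfl fun a _ => h1 a, Finset.prod_add]
    refine Finset.sum_congr rfl fun T hT => ?_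
    rw [prod_X_eq, prod_negX_eq, MvPolynomial.monomial_mul, one_mul]
  rw [expand, MvPolynomial.coeff_sum]
  simp only [MvPolynomial.coeff_monomial]
  have hbij : ∑ T ∈ A.powerset,
      (if ((∑ a ∈ T, Finsupp.single a.1 1) + ∑ a ∈ A \ T, Finsupp.single a.2 1 =
          Finsupp.equivFunOnFinite.symm fun v => ATPaper.outDeg A v)
        then ((-1 : ℚ) ^ ((A \ T).card)) else 0) =
      ∑ B ∈ A.powerset,
      (if ((∑ a ∈ A \ B, Finsupp.single a.1 1) + ∑ a ∈ A \ (A \ B), Finsupp.single a.2 1 =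
          Finsupp.equivFunOnFinite.symm fun v => ATPaper.outDeg A v)
        then ((-1 : ℚ) ^ ((A \ (A \ B)).card)) else 0) := by
    refine Finset.sum_nbij' (fun T => A \ T) (fun B => A \ B) ?_ ?_ ?_ ?_ ?_
    · intro T hT; exact Finset.mem_powerset.mpr (Finset.sdiff_subset)
    · intro B hB; exact Finset.mem_powerset.mpr (Finset.sdiff_subset)
    · intro T hT; exact Finset.sdiff_sdiff_eq_self (Finset.mem_powerset.mp hT)
    · intro B hB; exact Finset.sdiff_sdiff_eq_self (Finset.mem_powerset.mp hB)
    · intro T hT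
      rw [Finset.sdiff_sdiff_eq_self (Finset.mem_powerset.mp hT)]
  rw [hbij]
  have key : ∀ B ∈ A.powerset,
      (if ((∑ a ∈ A \ B, Finsupp.single a.1 1) + ∑ a ∈ A \ (A \ B), Finsupp.single a.2 1 =
          Finsupp.equivFunOnFinite.symm fun v => ATPaper.outDeg A v)
        then ((-1 : ℚ) ^ ((A \ (A \ B)).card)) else 0) =
      (if (∀ v, ATPaper.outDeg B v = ATPaper.inDeg B v) then ((-1 : ℚ) ^ B.card) else 0) := by
    intro B hB
    have hBA := Finset.mem_powerset.mp hB
    rw [Finset.sdiff_sdiff_eq_self hBA]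
    congr 1
    rw [eq_iff_iff]
    constructor
    · intro h v
      have hv := congrArg (fun g => g v) h
      simp only [Finsupp.coe_add, Pi.add_apply, Finsupp.coe_equivFunOnFinite_symm]
        at hv
      rw [sum_single_apply, sum_single_apply] at hv
      have hsplit : ATPaper.outDeg A v = ATPaper.outDeg (A \ B) v + ATPaper.outDeg B v := by
        unfold ATPaper.outDeg
        rw [← Finset.card_union_of_disjoint, ← Finset.filter_union,
          Finset.sdiff_union_of_subset hBA]
        exact Finset.disjoint_filter_filter (Finset.sdiff_disjoint)
      unfold ATPaper.outDeg at hsplit hv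
      unfold ATPaper.outDeg ATPaper.inDeg
      omega
    · intro h
      ext v
      simp only [Finsupp.coe_add, Pi.add_apply, Finsupp.coe_equivFunOnFinite_symm]
      rw [sum_single_apply, sum_single_apply]
      have hsplit : ATPaper.outDeg A v = ATPaper.outDeg (A \ B) v + ATPaper.outDeg B v := by
        unfold ATPaper.outDeg
        rw [← Finset.card_union_of_disjoint, ← Finset.filter_union,
          Finset.sdiff_union_of_subset hBA]
        exact Finset.disjoint_filter_filter (Finset.sdiff_disjoint)
      have := h v
      unfold ATPaper.outDeg at hsplit ⊢
      unfold ATPaper.outDeg ATPaper.inDeg at this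
      omega
  rw [Finset.sum_congr rfl key]
  rw [← Finset.sum_filter]
  have hsgn : ∀ B ∈ A.powerset.filter fun B => ∀ v, ATPaper.outDeg B v = ATPaper.inDeg B v,
      ((-1 : ℚ) ^ B.card) = if Even B.card then 1 else -1 := by
    intro B _
    by_cases h : Even B.card
    · simp [h, Even.neg_one_pow h]
    · simp [h, Odd.neg_one_pow (Nat.not_even_iff_odd.mp h)]
  rw [Finset.sum_congr rfl hsgn, Finset.sum_ite, Finset.sum_const, Finset.sum_const,
    Finset.filter_filter, Finset.filter_filter]
  unfold ATPaper.EE ATPaper.EO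
  simp only [nsmul_eq_mul, mul_one, mul_neg_one]
  ring_nf
  congr! 3 <;> congr
end ATHelp

/-- Alon–Tarsi / Schauz: if `G` is `f`-AT, then `G` is `f`-choosable. -/
theorem stmt_0 {V : Type*} [Fintype V] (G : SimpleGraph V) (f : V → ℕ)
    (hAT : ATPaper.IsfAT G f) : ATPaper.Choosable G f := by
  classical
  obtain ⟨A, hor, hEE, hout⟩ := hAT
  intro L hL
  set t : V → ℕ := fun v => ATPaper.outDeg A v with ht
  set P : MvPolynomial V ℚ := ∏ a ∈ A, (MvPolynomial.X a.1 - MvPolynomial.X a.2) with hP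
  have hc : MvPolynomial.coeff (Finsupp.equivFunOnFinite.symm t) P ≠ 0 := by
    rw [hP, ht, ATHelp.coeff_graphPoly]
    have hne : (ATPaper.EE A : ℚ) ≠ (ATPaper.EO A : ℚ) := by exact_mod_cast hEE
    exact sub_ne_zero_of_ne hne
  have hsum : ∑ v, t v = A.card := by
    rw [Finset.card_eq_sum_card_fiberwise (f := Prod.fst) (t := Finset.univ)
      (fun a _ => Finset.mem_univ a.1)]
    rfl
  have hdeg : P.totalDegree ≤ ∑ v, t v := by
    rw [hsum, hP]
    calc (∏ a ∈ A, (MvPolynomial.X a.1 - MvPolynomial.X a.2 : MvPolynomial V ℚ)).totalDegree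
        ≤ ∑ a ∈ A, (MvPolynomial.X a.1 - MvPolynomial.X a.2 : MvPolynomial V ℚ).totalDegree :=
          MvPolynomial.totalDegree_finset_prod _ _
      _ ≤ ∑ _a ∈ A, 1 := Finset.sum_le_sum fun a _ => by
          calc (MvPolynomial.X a.1 - MvPolynomial.X a.2 : MvPolynomial V ℚ).totalDegree
              = (MvPolynomial.X a.1 + -MvPolynomial.X a.2 : MvPolynomial V ℚ).totalDegree := by
                rw [sub_eq_add_neg]
            _ ≤ max (MvPolynomial.X a.1 : MvPolynomial V ℚ).totalDegree
                  (-MvPolynomial.X a.2 : MvPolynomial V ℚ).totalDegree :=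
                MvPolynomial.totalDegree_add _ _
            _ ≤ 1 := by
                rw [MvPolynomial.totalDegree_neg, MvPolynomial.totalDegree_X,
                  MvPolynomial.totalDegree_X]
                simp
      _ = A.card := by simp
  have hLcard : ∀ v, t v + 1 ≤ ((L v).image (Nat.cast : ℕ → ℚ)).card := by
    intro v
    rw [Finset.card_image_of_injective _ Nat.cast_injective, hL v]
    exact hout v
  obtain ⟨x, hx, hev⟩ := ATHelp.cn t P hc hdeg _ hLcard
  choose φ hφ hcast using fun v => Finset.mem_image.mp (hx v)
  refine ⟨φ, hφ, ?_⟩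
  have hxne : ∀ a ∈ A, x a.1 ≠ x a.2 := by
    intro a ha
    have hevP : MvPolynomial.eval x P = ∏ a ∈ A, (x a.1 - x a.2) := by
      rw [hP, map_prod]
      exact Finset.prod_congr rfl fun a _ => by simp
    rw [hevP] at hev
    exact sub_ne_zero.mp (Finset.prod_ne_zero_iff.mp hev a ha)
  intro u v huv heq
  have hxeq : x u = x v := by rw [← hcast u, ← hcast v, heq]
  rcases (hor.1 u v).mp huv with h | h
  · exact hxne _ h hxeq
  · exact hxne _ h hxeq.symm
end

section
/- For every integer k ≥ 4 and every Gallai tree T with maximum degree at most k−1 and T ≠ K_k, the average degree of T satisfies d(T) < k − 2 + 2/(k−1). -/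
open scoped Classical

namespace AT2

open SimpleGraph ATPaper

variable {V : Type*}

/-! ### Walk / reachability helpers -/

lemma reach_induce_of_walk {T : SimpleGraph V} {A : Set V} {x y : V}
    (p : T.Walk x y) (hp : ∀ z ∈ p.support, z ∈ A) :
    (T.induce A).Reachable ⟨x, hp x p.start_mem_support⟩ ⟨y, hp y p.end_mem_support⟩ := by
  induction p with
  | nil => exact Reachable.refl _
  | @cons u v w h p ih =>
      have hv : v ∈ A := hp v (by simp)
      have hp' : ∀ z ∈ p.support, z ∈ A := fun z hz => hp z (by simp [hz])
      have h1 : (T.induce A).Adj ⟨u, hp u (Walk.start_mem_support _)⟩ ⟨v, hv⟩ := h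
      exact (h1.reachable).trans (ih hp')

lemma walk_of_reach_induce {T : SimpleGraph V} {A : Set V} {x y : ↥A}
    (h : (T.induce A).Reachable x y) :
    ∃ p : T.Walk x.1 y.1, ∀ z ∈ p.support, z ∈ A := by
  obtain ⟨p⟩ := h
  refine ⟨p.map ⟨Subtype.val, fun hadj => hadj⟩, ?_⟩
  intro z hz
  rw [Walk.support_map] at hz
  obtain ⟨⟨z', hz'⟩, _, rfl⟩ := List.mem_map.mp hz
  exact hz'

lemma reach_induce_mono {T : SimpleGraph V} {A B : Set V} (hAB : A ⊆ B) {x y : ↥A}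
    (h : (T.induce A).Reachable x y) :
    (T.induce B).Reachable ⟨x.1, hAB x.2⟩ ⟨y.1, hAB y.2⟩ := by
  obtain ⟨p, hp⟩ := walk_of_reach_induce h
  exact reach_induce_of_walk p (fun z hz => hAB (hp z hz))

/-! ### Good pairs -/

structure GoodPair (T : SimpleGraph V) (v : V) (S : Set V) : Prop where
  notMem : v ∉ S
  nonempty : S.Nonempty
  conn : (T.induce S).Connected
  closed : ∀ x ∈ S, ∀ y, T.Adj x y → y = v ∨ y ∈ S
  adj : ∃ s ∈ S, T.Adj v s

lemma GoodPair.walk_mem {T : SimpleGraph V} {v : V} {S : Set V} (hP : GoodPair T v S)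
    {x y : V} (p : T.Walk x y) (hx : x ∈ S) (hv : ∀ z ∈ p.support, z ≠ v) : y ∈ S := by
  induction p with
  | nil => exact hx
  | @cons a b c h p ih =>
      have hb : b ∈ S := by
        rcases hP.closed a hx b h with h1 | h1
        · exact absurd h1 (hv b (by simp))
        · exact h1
      exact ih hb (fun z hz => hv z (by simp [hz]))

lemma GoodPair.reach_compl_aux {T : SimpleGraph V} {v : V} {S : Set V} (hP : GoodPair T v S) :
    ∀ {y : V} (p : T.Walk y v), ∀ (hy : y ∈ Sᶜ),
    (T.induce Sᶜ).Reachable ⟨y, hy⟩ ⟨v, hP.notMem⟩ := by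
  intro y p
  induction p with
  | nil => intro hy; exact Reachable.refl _
  | @cons a b c h p ih =>
      intro hy
      by_cases hb : b ∈ S
      · rcases hP.closed b hb a h.symm with h1 | h1
        · subst h1; exact Reachable.refl _
        · exact absurd h1 hy
      · have h1 : (T.induce Sᶜ).Adj ⟨a, hy⟩ ⟨b, hb⟩ := h
        exact h1.reachable.trans (ih hP hb)

lemma GoodPair.compl_connected {T : SimpleGraph V} (hT : T.Connected) {v : V} {S : Set V}
    (hP : GoodPair T v S) : (T.induce Sᶜ).Connected := by
  rw [connected_iff]
  refine ⟨fun x y => ?_, ⟨⟨v, hP.notMem⟩⟩⟩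
  have hx := hP.reach_compl_aux (hT x.1 v).some x.2
  have hy := hP.reach_compl_aux (hT y.1 v).some y.2
  exact hx.trans hy.symm

/-! ### Degrees -/

noncomputable def ndeg (T : SimpleGraph V) (x : V) : ℕ := (T.neighborSet x).ncard

noncomputable def Dsum (T : SimpleGraph V) [Fintype V] : ℕ := ∑ x : V, ndeg T x

section FinV
variable [Fintype V]

lemma ndeg_eq_degree (T : SimpleGraph V) [DecidableRel T.Adj] (x : V) :
    ndeg T x = T.degree x := by
  rw [ndeg, ← Nat.card_coe_set_eq, Nat.card_eq_fintype_card]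
  convert SimpleGraph.card_neighborSet_eq_degree T x

lemma induce_ndeg (T : SimpleGraph V) (A : Set V) (x : ↥A) :
    ndeg (T.induce A) x = (T.neighborSet x.1 ∩ A).ncard := by
  rw [ndeg, ← Nat.card_coe_set_eq, ← Nat.card_coe_set_eq]
  apply Nat.card_congr
  exact ⟨fun y => ⟨y.1.1, ⟨y.2, y.1.2⟩⟩, fun y => ⟨⟨y.1, y.2.2⟩, y.2.1⟩,
    fun y => rfl, fun y => rfl⟩

lemma ndeg_split (T : SimpleGraph V) (S : Set V) (x : V) :
    ndeg T x = (T.neighborSet x ∩ S).ncard + (T.neighborSet x ∩ Sᶜ).ncard := by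
  rw [ndeg, ← Set.ncard_union_eq
    (Set.disjoint_of_subset Set.inter_subset_right Set.inter_subset_right
      disjoint_compl_right)]
  congr 1
  rw [← Set.inter_union_distrib_left, Set.union_compl_self, Set.inter_univ]

omit [Fintype V] in
lemma GoodPair.nbr_inter_empty {T : SimpleGraph V} {v : V} {S : Set V} (hP : GoodPair T v S)
    {x : V} (hx : x ∈ Sᶜ) (hxv : x ≠ v) : T.neighborSet x ∩ S = ∅ := by
  ext y
  simp only [Set.mem_inter_iff, Set.mem_empty_iff_false, iff_false, not_and]
  intro hadj hy
  rcases hP.closed y hy x hadj.symm with h | h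
  · exact hxv h
  · exact hx h

lemma GoodPair.dsum_eq {T : SimpleGraph V} {v : V} {S : Set V} (hP : GoodPair T v S) :
    Dsum T = Dsum (T.induce Sᶜ) + ((∑ x ∈ S.toFinset, ndeg T x) +
      (T.neighborSet v ∩ S).ncard) := by
  have hsplit : Dsum T = ∑ x ∈ Sᶜ.toFinset, ndeg T x + ∑ x ∈ S.toFinset, ndeg T x := by
    rw [Dsum, ← Finset.sum_add_sum_compl S.toFinset, Set.toFinset_compl, add_comm]
  have hsub : ∑ x ∈ Sᶜ.toFinset, ndeg T x = ∑ x : ↥(Sᶜ), ndeg T x.1 :=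
    Finset.sum_subtype _ (fun x => Set.mem_toFinset) _
  have hpt : ∀ x : ↥(Sᶜ), ndeg T x.1
      = ndeg (T.induce Sᶜ) x + (T.neighborSet x.1 ∩ S).ncard := by
    intro x
    rw [induce_ndeg, ndeg_split T S x.1, add_comm]
  have hzero : ∀ x : ↥(Sᶜ), x.1 ≠ v → (T.neighborSet x.1 ∩ S).ncard = 0 := by
    intro x hxv
    rw [hP.nbr_inter_empty x.2 hxv, Set.ncard_empty]
  have h2 : ∑ x : ↥(Sᶜ), ndeg T x.1
      = Dsum (T.induce Sᶜ) + (T.neighborSet v ∩ S).ncard := by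
    rw [Dsum, Finset.sum_congr rfl (fun x _ => hpt x), Finset.sum_add_distrib]
    congr 1
    rw [Finset.sum_eq_single (⟨v, hP.notMem⟩ : ↥(Sᶜ))]
    · intro b _ hb
      exact hzero b (fun h => hb (Subtype.ext h))
    · intro h; exact absurd (Finset.mem_univ _) h
  rw [hsplit, hsub, h2]; ring

end FinV
end AT2


namespace AT2
open SimpleGraph ATPaper
variable {V : Type*}

noncomputable def induceInduceIso (T : SimpleGraph V) (A : Set V) (B' : Set ↥A) :
    ((T.induce A).induce B') ≃g (T.induce (Subtype.val '' B')) where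
  toEquiv := Equiv.Set.image Subtype.val B' Subtype.val_injective
  map_rel_iff' := by
    intro a b
    simp only [Equiv.Set.image_apply]
    rfl

lemma iso_preconnected {W : Type*} {G : SimpleGraph V} {H : SimpleGraph W} (f : G ≃g H)
    (h : G.Preconnected) : H.Preconnected :=
  SimpleGraph.Preconnected.map f.toHom f.toEquiv.surjective h

lemma iso_connected {W : Type*} {G : SimpleGraph V} {H : SimpleGraph W} (f : G ≃g H)
    (h : G.Connected) : H.Connected :=
  SimpleGraph.Connected.map f.toHom f.toEquiv.surjective h

lemma preconnected_up (T : SimpleGraph V) (A : Set V) (B' : Set ↥A)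
    (h : ((T.induce A).induce B').Preconnected) :
    (T.induce (Subtype.val '' B')).Preconnected :=
  iso_preconnected (induceInduceIso T A B') h

lemma preconnected_down (T : SimpleGraph V) (A : Set V) (B' : Set ↥A)
    (h : (T.induce (Subtype.val '' B')).Preconnected) :
    ((T.induce A).induce B').Preconnected :=
  iso_preconnected (induceInduceIso T A B').symm h

lemma connected_up (T : SimpleGraph V) (A : Set V) (B' : Set ↥A)
    (h : ((T.induce A).induce B').Connected) :
    (T.induce (Subtype.val '' B')).Connected :=
  iso_connected (induceInduceIso T A B') h

lemma connected_down (T : SimpleGraph V) (A : Set V) (B' : Set ↥A)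
    (h : (T.induce (Subtype.val '' B')).Connected) :
    ((T.induce A).induce B').Connected :=
  iso_connected (induceInduceIso T A B').symm h

lemma preconnected_of_subsingleton {T : SimpleGraph V} {A : Set V} (h : A.Subsingleton) :
    (T.induce A).Preconnected := by
  intro a b
  rw [Subtype.ext (h a.2 b.2)]

lemma pair_connected {T : SimpleGraph V} {x y : V} (h : T.Adj x y) :
    (T.induce {x, y}).Connected := by
  rw [SimpleGraph.connected_iff]
  refine ⟨?_, ⟨⟨x, by simp⟩⟩⟩
  have hadj : (T.induce ({x, y} : Set V)).Adj ⟨x, by simp⟩ ⟨y, by simp⟩ := h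
  intro a b
  have key : ∀ c : ↥({x, y} : Set V), c = ⟨x, by simp⟩ ∨ c = ⟨y, by simp⟩ := by
    rintro ⟨c, (rfl | rfl)⟩
    · left; rfl
    · right; rfl
  rcases key a with rfl | rfl <;> rcases key b with rfl | rfl
  · rfl
  · exact hadj.reachable
  · exact hadj.symm.reachable
  · rfl

lemma pair_noCutVtx (T : SimpleGraph V) (x y : V) : NoCutVtx T {x, y} := by
  intro w hw
  apply preconnected_of_subsingleton
  intro a ha b hb
  obtain ⟨ha1, ha2⟩ := ha
  obtain ⟨hb1, hb2⟩ := hb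
  simp only [Set.mem_insert_iff, Set.mem_singleton_iff] at ha1 hb1 hw
  simp only [Set.mem_singleton_iff] at ha2 hb2
  rcases hw with rfl | rfl
  · rcases ha1 with rfl | rfl
    · exact absurd rfl ha2
    rcases hb1 with rfl | rfl
    · exact absurd rfl hb2
    rfl
  · rcases ha1 with rfl | rfl
    swap
    · exact absurd rfl ha2
    rcases hb1 with rfl | rfl
    swap
    · exact absurd rfl hb2
    rfl

lemma exists_adj_of_walk_ne {T : SimpleGraph V} {x y : V} (p : T.Walk x y) (hxy : x ≠ y) :
    ∃ z, T.Adj x z := by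
  cases p with
  | nil => exact absurd rfl hxy
  | cons h _ => exact ⟨_, h⟩

/-- Transfer of the Gallai property to the complement of a good pair. -/
lemma GoodPair.gallai_compl {T : SimpleGraph V} {v : V} {S : Set V}
    (hP : GoodPair T v S) (hT : IsGallaiTree T) :
    IsGallaiTree (T.induce Sᶜ) := by
  have hTconn := hT.1
  refine ⟨hP.compl_connected hTconn, ?_⟩
  intro B' hB'
  by_cases hss : (Sᶜ : Set V).Subsingleton
  · left; intro a ha b hb hab
    exact absurd (Subtype.ext (hss a.2 b.2)) hab
  obtain ⟨hB'conn, hB'ncv, hB'max⟩ := hB'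
  set T' := T.induce Sᶜ with hT'def
  set B₀ : Set V := Subtype.val '' B' with hB₀def
  have hB₀A : B₀ ⊆ Sᶜ := by rintro _ ⟨b', _, rfl⟩; exact b'.2
  have hvc : v ∈ Sᶜ := hP.notMem
  -- B' has an element with val ≠ v
  have hex : ∃ b' ∈ B', (b' : ↥(Sᶜ)).1 ≠ v := by
    by_contra hcon
    push_neg at hcon
    have hne : Nonempty ↥B' := hB'conn.nonempty
    obtain ⟨b0⟩ := hne
    have hv' : (⟨v, hvc⟩ : ↥(Sᶜ)) ∈ B' := by
      have := hcon b0.1 b0.2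
      have h2 : b0.1 = ⟨v, hvc⟩ := Subtype.ext this
      rw [← h2]; exact b0.2
    have hBsing : B' = {⟨v, hvc⟩} := by
      apply subset_antisymm
      · intro b hb; exact Subtype.ext (hcon b hb)
      · intro b hb; rw [hb]; exact hv'
    rw [Set.not_subsingleton_iff] at hss
    obtain ⟨a, ha, c, hc, hac⟩ := hss
    have hnt : ∃ u' : ↥(Sᶜ), u' ≠ (⟨v, hvc⟩ : ↥(Sᶜ)) := by
      by_cases hav : a = v
      · exact ⟨⟨c, hc⟩, fun h => hac (hav.trans (congrArg Subtype.val h).symm ▸ (hav.trans (congrArg Subtype.val h).symm))⟩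
      · exact ⟨⟨a, ha⟩, fun h => hav (congrArg Subtype.val h)⟩
    obtain ⟨u', hu'⟩ := hnt
    have hT'conn := hP.compl_connected hTconn
    obtain ⟨p⟩ := hT'conn ⟨v, hvc⟩ u'
    obtain ⟨z, hz⟩ := exists_adj_of_walk_ne p (fun h => hu' h.symm)
    have hCeq := hB'max {⟨v, hvc⟩, z} (by rw [hBsing]; intro w hw; exact Or.inl hw)
      (pair_connected hz) (pair_noCutVtx T' _ _)
    have hzB : z ∈ B' := by rw [← hCeq]; simp
    rw [hBsing] at hzB
    simp only [Set.mem_singleton_iff] at hzB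
    exact T'.irrefl (hzB ▸ hz)
  obtain ⟨b', hb'B, hb'v⟩ := hex
  -- Step 1: B₀ is a block of T
  have hblk : IsBlockSet T B₀ := by
    refine ⟨connected_up T Sᶜ B' hB'conn, ?_, ?_⟩
    · intro w hw
      obtain ⟨w', hw', rfl⟩ := hw
      have h2 := preconnected_up T Sᶜ (B' \ {w'}) (hB'ncv w' hw')
      rwa [Set.image_diff Subtype.val_injective, Set.image_singleton] at h2
    · intro C₀ hsub hC₀conn hC₀ncv
      have hCS : ∀ x ∈ C₀, x ∉ S := by
        intro x hxC hxS
        have hbC : b'.1 ∈ C₀ := hsub ⟨b', hb'B, rfl⟩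
        have hbS : b'.1 ∉ S := b'.2
        by_cases hvC : v ∈ C₀
        · have hpre := hC₀ncv v hvC
          have hx' : x ∈ C₀ \ {v} := ⟨hxC, fun h => hP.notMem (by rwa [← h])⟩
          have hb2 : b'.1 ∈ C₀ \ {v} := ⟨hbC, by simp [hb'v]⟩
          obtain ⟨p, hp⟩ := walk_of_reach_induce (hpre ⟨x, hx'⟩ ⟨b'.1, hb2⟩)
          exact hbS (hP.walk_mem p hxS (fun z hz h => (hp z hz).2 (by simp [h])))
        · obtain ⟨p, hp⟩ := walk_of_reach_induce (hC₀conn.preconnected ⟨x, hxC⟩ ⟨b'.1, hbC⟩)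
          exact hbS (hP.walk_mem p hxS (fun z hz h => hvC (h ▸ hp z hz)))
      have hC₀A : C₀ ⊆ Sᶜ := fun x hx => hCS x hx
      set C' : Set ↥(Sᶜ) := Subtype.val ⁻¹' C₀ with hC'def
      have himg : Subtype.val '' C' = C₀ := by
        rw [hC'def, Set.image_preimage_eq_inter_range, Subtype.range_val]
        exact Set.inter_eq_self_of_subset_left hC₀A
      have hconn' : (T'.induce C').Connected := connected_down T Sᶜ C' (by rwa [himg])
      have hncv' : NoCutVtx T' C' := by
        intro w' hw'
        apply preconnected_down
        rw [Set.image_diff Subtype.val_injective, Set.image_singleton, himg]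
        exact hC₀ncv w'.1 hw'
      have hCB : C' = B' := hB'max C' (fun b hb => hsub ⟨b, hb, rfl⟩) hconn' hncv'
      rw [← himg, hCB]
  rcases hT.2 B₀ hblk with hcl | hoc
  · left
    intro a ha c hc hac
    exact hcl ⟨a, ha, rfl⟩ ⟨c, hc, rfl⟩ (fun h => hac (Subtype.ext h))
  · right
    obtain ⟨hc1, hc2, hc3, hc4⟩ := hoc
    have hcard : Nat.card ↥B' = Nat.card ↥B₀ := by
      rw [Nat.card_coe_set_eq, Nat.card_coe_set_eq, hB₀def,
        Set.ncard_image_of_injective _ Subtype.val_injective]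
    have hmem : ∀ (u : V) (hu : u ∈ B₀) (h : u ∈ Sᶜ), (⟨u, h⟩ : ↥(Sᶜ)) ∈ B' := by
      rintro _ ⟨b'', hb'', rfl⟩ h
      rwa [show (⟨b''.1, h⟩ : ↥(Sᶜ)) = b'' from Subtype.ext rfl]
    refine ⟨connected_down T Sᶜ B' hc1, by rwa [hcard], by rwa [hcard], ?_⟩
    intro w' hw'
    rw [← hc4 w'.1 ⟨w', hw', rfl⟩]
    exact Nat.card_congr
      ⟨fun u => ⟨u.1.1, ⟨u.1, u.2.1, rfl⟩, u.2.2⟩,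
       fun u => ⟨⟨u.1, hB₀A u.2.1⟩, hmem u.1 u.2.1 _, u.2.2⟩,
       fun u => Subtype.ext (Subtype.ext rfl), fun u => Subtype.ext rfl⟩

lemma induce_natcard_neighborSet (T : SimpleGraph V) (A : Set V) (x : ↥A) :
    Nat.card ((T.induce A).neighborSet x) = (T.neighborSet x.1 ∩ A).ncard := by
  rw [← Nat.card_coe_set_eq]
  apply Nat.card_congr
  exact ⟨fun y => ⟨y.1.1, ⟨y.2, y.1.2⟩⟩, fun y => ⟨⟨y.1, y.2.2⟩, y.2.1⟩,
    fun y => rfl, fun y => rfl⟩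

lemma GoodPair.maxdeg_compl [Finite V] {T : SimpleGraph V} {v : V} {S : Set V}
    (_ : GoodPair T v S) {m : ℕ} (hm : ∀ x, Nat.card (T.neighborSet x) ≤ m) :
    ∀ x' : ↥(Sᶜ), Nat.card ((T.induce Sᶜ).neighborSet x') ≤ m := by
  intro x'
  rw [induce_natcard_neighborSet]
  calc (T.neighborSet x'.1 ∩ Sᶜ).ncard ≤ (T.neighborSet x'.1).ncard :=
        Set.ncard_le_ncard Set.inter_subset_left (Set.toFinite _)
    _ = Nat.card (T.neighborSet x'.1) := (Nat.card_coe_set_eq _).symm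
    _ ≤ m := hm _

lemma top_natcard_neighborSet (k : ℕ) (w : Fin k) :
    Nat.card ((⊤ : SimpleGraph (Fin k)).neighborSet w) = k - 1 := by
  have h : (⊤ : SimpleGraph (Fin k)).neighborSet w = {w}ᶜ := by
    ext y
    simp only [SimpleGraph.mem_neighborSet, SimpleGraph.top_adj, Set.mem_compl_iff,
      Set.mem_singleton_iff]
    exact ⟨fun h1 h2 => h1 h2.symm, fun h1 h2 => h1 h2.symm⟩
  rw [h, Nat.card_coe_set_eq]
  have h2 := Set.ncard_add_ncard_compl ({w} : Set (Fin k))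
  rw [Set.ncard_singleton, Nat.card_eq_fintype_card, Fintype.card_fin] at h2
  omega

lemma GoodPair.not_complete_compl [Fintype V] {T : SimpleGraph V} {v : V} {S : Set V}
    (hP : GoodPair T v S) {k : ℕ} (hk4 : 4 ≤ k)
    (hm : ∀ x, Nat.card (T.neighborSet x) ≤ k - 1) :
    ¬ IsCompleteK (T.induce Sᶜ) k := by
  rintro ⟨φ⟩
  have hvc : v ∈ Sᶜ := hP.notMem
  set v' : ↥(Sᶜ) := ⟨v, hvc⟩
  have h1 : Nat.card ((T.induce Sᶜ).neighborSet v') = k - 1 := by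
    rw [Nat.card_congr (φ.mapNeighborSet v'), top_natcard_neighborSet]
  obtain ⟨s, hsS, hadj⟩ := hP.adj
  set N' := (T.induce Sᶜ).neighborSet v'
  have h2 : insert s (Subtype.val '' N') ⊆ T.neighborSet v := by
    intro z hz
    rcases hz with rfl | ⟨u', hu', rfl⟩
    · exact hadj
    · exact hu'
  have h3 : s ∉ Subtype.val '' N' := by
    rintro ⟨u', _, rfl⟩
    exact u'.2 hsS
  have h4 : (insert s (Subtype.val '' N')).ncard = k := by
    rw [Set.ncard_insert_of_notMem h3 (Set.toFinite _),
      Set.ncard_image_of_injective _ Subtype.val_injective,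
      ← Nat.card_coe_set_eq, h1]
    omega
  have h5 : (insert s (Subtype.val '' N')).ncard ≤ (T.neighborSet v).ncard :=
    Set.ncard_le_ncard h2 (Set.toFinite _)
  have h6 := hm v
  rw [Nat.card_coe_set_eq] at h6
  omega


lemma exists_adj_aux_dummy : True := trivial

/-- the component of `a` in `T - v` -/
def compv (T : SimpleGraph V) (v a : V) : Set V :=
  {z | ∃ hz : z ∈ ({v}ᶜ : Set V), ∃ ha : a ∈ ({v}ᶜ : Set V),
    (T.induce {v}ᶜ).Reachable ⟨a, ha⟩ ⟨z, hz⟩}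

lemma exists_adj_aux {T : SimpleGraph V} :
    ∀ {x v : V} (p : T.Walk x v) (S : Set V), x ∈ S → v ∉ S →
      (∀ x ∈ S, ∀ y, T.Adj x y → y = v ∨ y ∈ S) → ∃ s ∈ S, T.Adj v s := by
  intro x v p
  induction p with
  | nil => intro S hx hv _; exact absurd hx hv
  | @cons x b c h p ih =>
      intro S hx hv hcl
      rcases hcl x hx b h with rfl | hb
      · exact ⟨x, hx, h.symm⟩
      · exact ih S hb hv hcl

lemma comp_goodPair {T : SimpleGraph V} (hT : T.Connected) {v a : V} (hav : a ≠ v) :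
    GoodPair T v (compv T v a) := by
  have haA : a ∈ ({v}ᶜ : Set V) := hav
  have hmem : ∀ z ∈ compv T v a, z ≠ v := fun z hz => hz.1
  have hclosed : ∀ x ∈ compv T v a, ∀ y, T.Adj x y → y = v ∨ y ∈ compv T v a := by
    intro x hx y hxy
    by_cases hyv : y = v
    · exact Or.inl hyv
    · right
      obtain ⟨hxA, haA', hreach⟩ := hx
      have hadj : (T.induce ({v}ᶜ : Set V)).Adj ⟨x, hxA⟩ ⟨y, hyv⟩ := hxy
      exact ⟨hyv, haA', hreach.trans hadj.reachable⟩
  refine ⟨fun h => (hmem v h) rfl, ⟨a, ⟨haA, haA, Reachable.refl _⟩⟩, ?_, hclosed, ?_⟩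
  · -- connectivity of the component
    rw [SimpleGraph.connected_iff]
    refine ⟨?_, ⟨⟨a, ⟨haA, haA, Reachable.refl _⟩⟩⟩⟩
    have key : ∀ z : ↥(compv T v a),
        (T.induce (compv T v a)).Reachable ⟨a, ⟨haA, haA, Reachable.refl _⟩⟩ z := by
      rintro ⟨z, hzA, haA', hreach⟩
      obtain ⟨p⟩ := hreach
      have hsup : ∀ w' ∈ p.support, (w' : ↥({v}ᶜ : Set V)).1 ∈ compv T v a := by
        intro w' hw'
        exact ⟨w'.2, haA', ⟨p.takeUntil w' hw'⟩⟩
      have hq : ∀ z' ∈ (p.map (⟨Subtype.val, fun h => h⟩ :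
          (T.induce ({v}ᶜ : Set V)) →g T)).support, z' ∈ compv T v a := by
        intro z' hz'
        rw [Walk.support_map] at hz'
        obtain ⟨w', hw', rfl⟩ := List.mem_map.mp hz'
        exact hsup w' hw'
      exact reach_induce_of_walk _ hq
    intro z1 z2
    exact (key z1).symm.trans (key z2)
  · -- v has a neighbor in the component
    exact exists_adj_aux (hT a v).some (compv T v a)
      ⟨haA, haA, Reachable.refl _⟩ (fun h => hmem v h rfl) hclosed


lemma insert_conn {T : SimpleGraph V} {v : V} {S : Set V} (hP : GoodPair T v S) :
    (T.induce (insert v S)).Connected := by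
  obtain ⟨s0, hs0, hadj⟩ := hP.adj
  have hs0' : s0 ∈ insert v S := Set.mem_insert_of_mem _ hs0
  rw [SimpleGraph.connected_iff]
  refine ⟨?_, ⟨⟨v, Set.mem_insert _ _⟩⟩⟩
  have key : ∀ z : ↥(insert v S), (T.induce (insert v S)).Reachable z ⟨s0, hs0'⟩ := by
    rintro ⟨z, hz | hz⟩
    · exact (show (T.induce (insert v S)).Adj ⟨z, Set.mem_insert_iff.mpr (Or.inl hz)⟩
        ⟨s0, hs0'⟩ from show T.Adj z s0 by rw [hz]; exact hadj).reachable
    · have := hP.conn.preconnected ⟨z, hz⟩ ⟨s0, hs0⟩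
      exact reach_induce_mono (Set.subset_insert _ _) this
  intro z1 z2
  exact (key z1).trans (key z2).symm

lemma reach_gateway_aux {T : SimpleGraph V} :
    ∀ {y v : V} (p : T.Walk y v) (S : Set V) (w : V)
      (hcl : ∀ x ∈ S, ∀ z, T.Adj x z → z = v ∨ z ∈ S)
      (hv : v ∈ insert v S \ {w}) (hy : y ∈ insert v S \ {w}),
      (∀ z ∈ p.support, z ≠ w) →
      (T.induce (insert v S \ {w})).Reachable ⟨y, hy⟩ ⟨v, hv⟩ := by
  intro y v p
  induction p with
  | nil =>
      intro S w hcl hv hy _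
      exact Reachable.refl _
  | @cons y b c h p ih =>
      intro S w hcl hv hy hsup
      rcases hy.1 with rfl | hyS
      · exact Reachable.refl _
      · have hbw : b ≠ w := hsup b (by simp)
        have hb : b ∈ insert c S \ {w} := by
          rcases hcl y hyS b h with rfl | hbS
          · exact hv
          · exact ⟨Set.mem_insert_of_mem _ hbS, hbw⟩
        have hadj : (T.induce (insert c S \ {w})).Adj ⟨y, hy⟩ ⟨b, hb⟩ := h
        exact hadj.reachable.trans (ih S w hcl hv hb (fun z hz => hsup z (by simp [hz])))

lemma min_pair_noCutVtx {T : SimpleGraph V} (hT : T.Connected) {v : V} {S : Set V}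
    (hP : GoodPair T v S)
    (hmin : ∀ (w : V) (S' : Set V), GoodPair T w S' → S.ncard ≤ S'.ncard)
    [Finite V] :
    NoCutVtx T (insert v S) := by
  intro w hw
  rcases hw with rfl | hwS
  · rw [Set.insert_diff_self_of_notMem hP.notMem]
    exact hP.conn.preconnected
  · -- w ∈ S
    have hwv : w ≠ v := fun h => hP.notMem (h ▸ hwS)
    have hvA : v ∈ insert v S \ {w} := ⟨Set.mem_insert _ _, fun h => hwv (by
      simpa using h.symm)⟩
    by_contra hnc
    -- some vertex of A cannot reach v avoiding w
    have hex : ∃ c ∈ insert v S \ {w},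
        ¬ ∃ p : T.Walk c v, ∀ z ∈ p.support, z ≠ w := by
      by_contra hcon
      push_neg at hcon
      apply hnc
      intro a b
      obtain ⟨pa, hpa⟩ := hcon a.1 a.2
      obtain ⟨pb, hpb⟩ := hcon b.1 b.2
      have ra := reach_gateway_aux pa S w hP.closed hvA a.2 hpa
      have rb := reach_gateway_aux pb S w hP.closed hvA b.2 hpb
      have ha2 : (⟨a.1, a.2⟩ : ↥(insert v S \ {w})) = a := Subtype.ext rfl
      have hb2 : (⟨b.1, b.2⟩ : ↥(insert v S \ {w})) = b := Subtype.ext rfl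
      rw [ha2] at ra
      rw [hb2] at rb
      exact ra.trans rb.symm
    obtain ⟨c, hcA, hcQ⟩ := hex
    have hcv : c ≠ v := by
      rintro rfl
      exact hcQ ⟨Walk.nil, fun z hz => by
        simp only [Walk.support_nil, List.mem_singleton] at hz
        subst hz; exact fun h => hwv h.symm⟩
    have hcS : c ∈ S := by
      rcases hcA.1 with rfl | h
      · exact absurd rfl hcv
      · exact h
    have hcw : c ≠ w := hcA.2
    -- the component of c in T - w is a strictly smaller good pair
    have hP' : GoodPair T w (compv T w c) := comp_goodPair hT hcw
    have hsub : compv T w c ⊆ S \ {w} := by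
      intro z hz
      obtain ⟨hzw, hcw', hreach⟩ := hz
      obtain ⟨p, hp⟩ := walk_of_reach_induce hreach
      have hvsup : ∀ x ∈ p.support, x ≠ v := by
        intro x hx hxv
        subst hxv
        exact hcQ ⟨p.takeUntil x hx, fun z hz =>
          hp z (Walk.support_takeUntil_subset _ _ hz)⟩
      exact ⟨hP.walk_mem p hcS hvsup, hzw⟩
    have hlt : (compv T w c).ncard < S.ncard := by
      calc (compv T w c).ncard ≤ (S \ {w}).ncard := Set.ncard_le_ncard hsub (Set.toFinite _)
        _ < S.ncard := Set.ncard_diff_singleton_lt_of_mem hwS (Set.toFinite _)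
    exact absurd (hmin w _ hP') (by omega)

lemma min_pair_block {T : SimpleGraph V} (hT : T.Connected) {v : V} {S : Set V}
    (hP : GoodPair T v S)
    (hmin : ∀ (w : V) (S' : Set V), GoodPair T w S' → S.ncard ≤ S'.ncard)
    [Finite V] :
    IsBlockSet T (insert v S) := by
  refine ⟨insert_conn hP, min_pair_noCutVtx hT hP hmin, ?_⟩
  intro C₀ hsub hconn hncv
  apply subset_antisymm _ hsub
  intro z hz
  by_contra hzB
  obtain ⟨s0, hs0S⟩ := hP.nonempty
  have hvC : v ∈ C₀ := hsub (Set.mem_insert _ _)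
  have hs0C : s0 ∈ C₀ := hsub (Set.mem_insert_of_mem _ hs0S)
  have hzv : z ≠ v := fun h => hzB (h ▸ Set.mem_insert _ _)
  have hs0v : s0 ≠ v := fun h => hP.notMem (h ▸ hs0S)
  have hpre := hncv v hvC
  obtain ⟨p, hp⟩ := walk_of_reach_induce
    (hpre ⟨s0, ⟨hs0C, hs0v⟩⟩ ⟨z, ⟨hz, hzv⟩⟩)
  have : z ∈ S := hP.walk_mem p hs0S (fun x hx => (hp x hx).2)
  exact hzB (Set.mem_insert_of_mem _ this)

lemma clique_nbr {T : SimpleGraph V} {v : V} {S : Set V} (hP : GoodPair T v S)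
    (hcl : T.IsClique (insert v S)) {x : V} (hx : x ∈ S) :
    T.neighborSet x = insert v S \ {x} := by
  ext y
  simp only [mem_neighborSet, Set.mem_diff, Set.mem_singleton_iff]
  constructor
  · intro h
    refine ⟨?_, h.ne'⟩
    rcases hP.closed x hx y h with rfl | h2
    · exact Set.mem_insert _ _
    · exact Set.mem_insert_of_mem _ h2
  · rintro ⟨hy, hyx⟩
    exact (hcl (Set.mem_insert_of_mem _ hx) hy (fun h => hyx h.symm))

lemma clique_ndeg {T : SimpleGraph V} {v : V} {S : Set V} (hP : GoodPair T v S)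
    (hcl : T.IsClique (insert v S)) {x : V} (hx : x ∈ S) [Finite V] :
    ndeg T x = S.ncard := by
  rw [ndeg, clique_nbr hP hcl hx,
    Set.ncard_diff_singleton_of_mem (Set.mem_insert_of_mem _ hx),
    Set.ncard_insert_of_notMem hP.notMem (Set.toFinite _)]
  omega

lemma clique_gateway {T : SimpleGraph V} {v : V} {S : Set V} (hP : GoodPair T v S)
    (hcl : T.IsClique (insert v S)) :
    T.neighborSet v ∩ S = S := by
  apply Set.inter_eq_self_of_subset_right
  intro x hx
  exact hcl (Set.mem_insert _ _) (Set.mem_insert_of_mem _ hx)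
    (fun h => hP.notMem (h ▸ hx))

lemma cycle_ndeg {T : SimpleGraph V} {v : V} {S : Set V} (hP : GoodPair T v S)
    (hcyc : IsOddCycleSet T (insert v S)) {x : V} (hx : x ∈ S) :
    ndeg T x = 2 := by
  have h1 : T.neighborSet x = {u : V | u ∈ insert v S ∧ T.Adj x u} := by
    ext u
    simp only [mem_neighborSet, Set.mem_setOf_eq]
    refine ⟨fun h => ⟨?_, h⟩, fun h => h.2⟩
    rcases hP.closed x hx u h with rfl | h2
    · exact Set.mem_insert _ _
    · exact Set.mem_insert_of_mem _ h2
  rw [ndeg, h1, ← Nat.card_coe_set_eq]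
  exact hcyc.2.2.2 x (Set.mem_insert_of_mem _ hx)

lemma cycle_gateway {T : SimpleGraph V} {v : V} {S : Set V} (hP : GoodPair T v S)
    (hcyc : IsOddCycleSet T (insert v S)) :
    (T.neighborSet v ∩ S).ncard = 2 := by
  have h1 : T.neighborSet v ∩ S = {u : V | u ∈ insert v S ∧ T.Adj v u} := by
    ext u
    simp only [Set.mem_inter_iff, mem_neighborSet, Set.mem_setOf_eq]
    constructor
    · rintro ⟨h1, h2⟩; exact ⟨Set.mem_insert_of_mem _ h2, h1⟩
    · rintro ⟨h1, h2⟩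
      refine ⟨h2, ?_⟩
      rcases h1 with rfl | h1
      · exact absurd h2 (T.irrefl)
      · exact h1
  rw [h1, ← Nat.card_coe_set_eq]
  exact hcyc.2.2.2 v (Set.mem_insert _ _)

lemma cycle3_clique {T : SimpleGraph V} {B : Set V} [Finite V]
    (hcyc : IsOddCycleSet T B) (h3 : Nat.card B = 3) :
    T.IsClique B := by
  intro x hx y hy hxy
  have hsub : {u : V | u ∈ B ∧ T.Adj x u} ⊆ B \ {x} := by
    rintro u ⟨h1, h2⟩
    exact ⟨h1, fun h => T.irrefl (h ▸ h2)⟩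
  have hcard1 : ({u : V | u ∈ B ∧ T.Adj x u}).ncard = 2 := by
    rw [← Nat.card_coe_set_eq]; exact hcyc.2.2.2 x hx
  have hcard2 : (B \ {x}).ncard = 2 := by
    rw [Set.ncard_diff_singleton_of_mem hx, ← Nat.card_coe_set_eq, h3]
  have hEq : {u : V | u ∈ B ∧ T.Adj x u} = B \ {x} :=
    Set.eq_of_subset_of_ncard_le hsub (by omega) (Set.toFinite _)
  have hmem : y ∈ B \ {x} := ⟨hy, fun h => hxy (by simpa using h.symm)⟩
  rw [← hEq] at hmem
  exact hmem.2

/-- an edge into B from outside, given a walk crossing into B -/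
lemma cross_edge {T : SimpleGraph V} :
    ∀ {x y : V} (p : T.Walk x y) (B : Set V), x ∉ B → y ∈ B →
      ∃ u z, u ∉ B ∧ z ∈ B ∧ T.Adj u z := by
  intro x y p
  induction p with
  | nil => intro B hx hy; exact absurd hy hx
  | @cons x b c h p ih =>
      intro B hx hy
      by_cases hb : b ∈ B
      · exact ⟨x, b, hx, hb, h⟩
      · exact ih B hb hy

lemma gateway_outside_nbr {T : SimpleGraph V} (hT : T.Connected) {v : V} {S : Set V}
    (hP : GoodPair T v S) {w : V} (hw : w ∉ insert v S) :
    ∃ u, u ∉ insert v S ∧ T.Adj v u := by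
  obtain ⟨s0, hs0⟩ := hP.nonempty
  obtain ⟨u, z, hu, hz, hadj⟩ := cross_edge (hT w s0).some (insert v S) hw
    (Set.mem_insert_of_mem _ hs0)
  rcases Set.mem_insert_iff.mp hz with rfl | hzS
  · exact ⟨u, hu, hadj.symm⟩
  · rcases hP.closed z hzS u hadj.symm with rfl | h2
    · exact absurd (Set.mem_insert _ _) hu
    · exact absurd (Set.mem_insert_of_mem _ h2) hu

end AT2


namespace AT2
open SimpleGraph ATPaper
variable {V : Type*}

/-! arithmetic lemmas -/

lemma arith_clique_whole {K n : ℕ} (hK : 3 ≤ K) (hn1 : 1 ≤ n) (hnK : n ≤ K) :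
    K * (n * (n - 1)) + 2 * K ≤ (K * K - K + 2) * n := by
  obtain ⟨m, rfl⟩ : ∃ m, n = m + 1 := ⟨n - 1, by omega⟩
  obtain ⟨l, rfl⟩ : ∃ l, K = l + 3 := ⟨K - 3, by omega⟩
  have h1 : m + 1 - 1 = m := by omega
  have h2 : (l+3) * (l+3) - (l+3) + 2 = l*l + 5*l + 8 := by
    have : (l+3)*(l+3) = l*l+6*l+9 := by ring
    omega
  rw [h1, h2]
  have hm : m ≤ l + 2 := by omega
  zify
  nlinarith [mul_nonneg (by push_cast; linarith : (0:ℤ) ≤ (l:ℤ) + 2 - m)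
    (by push_cast; nlinarith : (0:ℤ) ≤ ((m:ℤ)+1)*((l:ℤ)+3)-2)]

lemma arith_cycle_whole {K n : ℕ} (hK : 3 ≤ K) (hn : 3 ≤ n) :
    K * (2 * n) + 2 * K ≤ (K * K - K + 2) * n := by
  obtain ⟨l, rfl⟩ : ∃ l, K = l + 3 := ⟨K - 3, by omega⟩
  obtain ⟨m, rfl⟩ : ∃ m, n = m + 3 := ⟨n - 3, by omega⟩
  have h2 : (l+3) * (l+3) - (l+3) + 2 = l*l + 5*l + 8 := by
    have : (l+3)*(l+3) = l*l+6*l+9 := by ring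
    omega
  rw [h2]
  nlinarith

lemma arith_clique_easy {K s : ℕ} (hs : 1 ≤ s) (hsK : s + 2 ≤ K) :
    K * (s * s + s) ≤ (K * K - K + 2) * s := by
  obtain ⟨l, rfl⟩ : ∃ l, K = s + 2 + l := ⟨K - s - 2, by omega⟩
  have h2 : (s+2+l) * (s+2+l) - (s+2+l) + 2 = (s+2+l)*(s+1+l) + 2 := by
    have : (s+2+l) * (s+2+l) = (s+2+l)*(s+1+l) + (s+2+l) := by ring
    omega
  rw [h2]
  calc (s+2+l) * (s * s + s) ≤ (s+2+l) * (s * s + s) + (s*((s+2+l)*l) + 2*s) :=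
        Nat.le_add_right _ _
    _ = ((s+2+l)*(s+1+l) + 2) * s := by ring

lemma arith_cycle_big {K s : ℕ} (hK : 3 ≤ K) (hs : 4 ≤ s) :
    K * (2 * s + 2) ≤ (K * K - K + 2) * s := by
  obtain ⟨l, rfl⟩ : ∃ l, K = l + 3 := ⟨K - 3, by omega⟩
  obtain ⟨m, rfl⟩ : ∃ m, s = m + 4 := ⟨s - 4, by omega⟩
  have h2 : (l+3) * (l+3) - (l+3) + 2 = l*l + 5*l + 8 := by
    have : (l+3)*(l+3) = l*l+6*l+9 := by ring
    omega
  rw [h2]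
  nlinarith

lemma arith_special {s : ℕ} :
    (s+1) * (((s+1) + s * s) + 1) ≤ ((s+1) * (s+1) - (s+1) + 2) * (s + 1) := by
  have h2 : (s+1) * (s+1) - (s+1) + 2 = s*s + s + 2 := by
    have : (s+1)*(s+1) = s*s + 2*s + 1 := by ring
    omega
  rw [h2]
  nlinarith

/-! whole-graph computations -/

lemma whole_clique_bound {K : ℕ} (hK : 3 ≤ K) [Fintype V] {T : SimpleGraph V}
    (hconn : T.Connected) (hcl : T.IsClique Set.univ)
    (hdeg : ∀ x, ndeg T x ≤ K) (hncomp : ¬ IsCompleteK T (K+1)) :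
    K * Dsum T + 2 * K ≤ (K * K - K + 2) * Fintype.card V := by
  set n := Fintype.card V with hn
  have hn1 : 1 ≤ n := Fintype.card_pos_iff.mpr hconn.nonempty
  have hnbr : ∀ x : V, T.neighborSet x = Set.univ \ {x} := by
    intro x
    ext y
    simp only [mem_neighborSet, Set.mem_diff, Set.mem_univ, true_and,
      Set.mem_singleton_iff]
    exact ⟨fun h => h.ne', fun h => hcl (Set.mem_univ x) (Set.mem_univ y)
      (fun h2 => h h2.symm)⟩
  have hnd : ∀ x : V, ndeg T x = n - 1 := by
    intro x
    rw [ndeg, hnbr x, Set.ncard_diff_singleton_of_mem (Set.mem_univ x),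
      Set.ncard_univ, Nat.card_eq_fintype_card]
  have hD : Dsum T = n * (n - 1) := by
    rw [Dsum, Finset.sum_congr rfl (fun x _ => hnd x), Finset.sum_const, Finset.card_univ,
      smul_eq_mul]
  have hnK1 : n ≤ K + 1 := by
    obtain ⟨x⟩ := hconn.nonempty
    have := hdeg x
    rw [hnd x] at this
    omega
  have hne : n ≠ K + 1 := by
    intro h
    apply hncomp
    refine ⟨⟨Fintype.equivFinOfCardEq h, ?_⟩⟩
    intro a b
    rw [top_adj]
    constructor
    · intro h2
      exact hcl (Set.mem_univ a) (Set.mem_univ b) (fun hx => h2 (congrArg _ hx))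
    · intro h2 hx
      exact h2.ne ((Fintype.equivFinOfCardEq h).injective hx)
  rw [hD]
  exact arith_clique_whole hK hn1 (by omega)

lemma whole_cycle_bound {K : ℕ} (hK : 3 ≤ K) [Fintype V] {T : SimpleGraph V}
    (hcyc : IsOddCycleSet T Set.univ) :
    K * Dsum T + 2 * K ≤ (K * K - K + 2) * Fintype.card V := by
  set n := Fintype.card V with hn
  have hn3 : 3 ≤ n := by
    have h := hcyc.2.2.1
    rwa [Nat.card_coe_set_eq, Set.ncard_univ, Nat.card_eq_fintype_card] at h

  have hnd : ∀ x : V, ndeg T x = 2 := by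
    intro x
    have h := hcyc.2.2.2 x (Set.mem_univ x)
    have h2 : {u : V | u ∈ Set.univ ∧ T.Adj x u} = T.neighborSet x := by
      ext u; simp [mem_neighborSet]
    rw [h2, Nat.card_coe_set_eq] at h
    exact h
  have hD : Dsum T = 2 * n := by
    rw [Dsum, Finset.sum_congr rfl (fun x _ => hnd x), Finset.sum_const, Finset.card_univ,
      smul_eq_mul, mul_comm]
  rw [hD]
  exact arith_cycle_whole hK hn3

end AT2

namespace AT2
open SimpleGraph ATPaper
universe u

theorem main (K : ℕ) (hK : 3 ≤ K) :
    ∀ (n : ℕ) (V : Type u) [Fintype V] (T : SimpleGraph V),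
      Fintype.card V = n → MemTk T (K+1) →
      K * Dsum T + 2 * K ≤ (K*K - K + 2) * n := by
  intro n
  induction n using Nat.strong_induction_on with
  | _ n IH =>
  intro V instV T hcard hMem
  obtain ⟨⟨hconn, hblocks⟩, hdeg, hncomp⟩ := hMem
  have hdegK : ∀ x, ndeg T x ≤ K := by
    intro x
    have h := hdeg x
    rwa [Nat.card_coe_set_eq, Nat.add_sub_cancel] at h
  have peel : ∀ (w : V) (S' : Set V), GoodPair T w S' →
      (∀ F : Finset V, (∀ x, x ∈ F ↔ x ∈ S') →
        K * ((∑ x ∈ F, ndeg T x) + (T.neighborSet w ∩ S').ncard)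
          ≤ (K*K - K + 2) * S'.ncard) →
      K * Dsum T + 2 * K ≤ (K*K - K + 2) * n := by
    intro w S' hP hΔ
    have hMem' : MemTk (T.induce S'ᶜ) (K+1) :=
      ⟨hP.gallai_compl ⟨hconn, hblocks⟩, fun x' => hP.maxdeg_compl hdeg x',
        hP.not_complete_compl (by omega) hdeg⟩
    have hs1 : 1 ≤ S'.ncard := (Set.ncard_pos (Set.toFinite _)).mpr hP.nonempty
    have hcx : Fintype.card ↥(S'ᶜ) = S'ᶜ.ncard := by
      rw [← Nat.card_coe_set_eq, Nat.card_eq_fintype_card]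
    have hcsum : S'.ncard + S'ᶜ.ncard = n := by
      rw [← hcard, ← Nat.card_eq_fintype_card]
      exact Set.ncard_add_ncard_compl S'
    have hlt : S'ᶜ.ncard < n := by omega
    have IH' := IH _ hlt ↥(S'ᶜ) (T.induce S'ᶜ) hcx hMem'
    have e1 : K * Dsum T = K * Dsum (T.induce S'ᶜ)
        + K * ((∑ x ∈ S'.toFinset, ndeg T x) + (T.neighborSet w ∩ S').ncard) := by
      rw [hP.dsum_eq]; ring
    calc K * Dsum T + 2*K
        = (K * Dsum (T.induce S'ᶜ) + 2*K)
          + K * ((∑ x ∈ S'.toFinset, ndeg T x) + (T.neighborSet w ∩ S').ncard) := by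
          rw [e1]; ring
      _ ≤ (K*K-K+2) * S'ᶜ.ncard + (K*K-K+2) * S'.ncard :=
          Nat.add_le_add IH' (hΔ _ (fun x => Set.mem_toFinset))
      _ = (K*K-K+2) * n := by rw [← hcsum]; ring
  by_cases hncv : NoCutVtx T Set.univ
  · have hblk : IsBlockSet T Set.univ := by
      refine ⟨iso_connected (induceUnivIso T).symm hconn, hncv, ?_⟩
      intro C hsub _ _
      exact Set.univ_subset_iff.mp hsub
    rcases hblocks _ hblk with hcl | hcyc
    · rw [← hcard]; exact whole_clique_bound hK hconn hcl hdegK hncomp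
    · rw [← hcard]; exact whole_cycle_bound hK hcyc
  · rw [NoCutVtx] at hncv
    push_neg at hncv
    obtain ⟨v1, -, hnpre⟩ := hncv
    have hcompl : (Set.univ \ {v1} : Set V) = ({v1}ᶜ : Set V) := by
      ext z; simp
    rw [hcompl] at hnpre
    rw [Preconnected] at hnpre
    push_neg at hnpre
    obtain ⟨x1, y1, -⟩ := hnpre
    have hx1v : x1.1 ≠ v1 := x1.2
    have hSne : {m | ∃ (w : V) (S' : Set V), GoodPair T w S' ∧ S'.ncard = m}.Nonempty :=
      ⟨_, v1, compv T v1 x1.1, comp_goodPair hconn hx1v, rfl⟩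
    obtain ⟨v₀, S, hP, hScard⟩ := Nat.sInf_mem hSne
    have hmin : ∀ (w : V) (S' : Set V), GoodPair T w S' → S.ncard ≤ S'.ncard := by
      intro w S' h
      rw [hScard]
      exact Nat.sInf_le ⟨w, S', h, rfl⟩
    have hblk := min_pair_block hconn hP hmin
    have hbcard : Nat.card ↥(insert v₀ S) = S.ncard + 1 := by
      rw [Nat.card_coe_set_eq, Set.ncard_insert_of_notMem hP.notMem (Set.toFinite _)]
    have hcl' : T.IsClique (insert v₀ S) ∨
        (IsOddCycleSet T (insert v₀ S) ∧ 4 ≤ S.ncard) := by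
      rcases hblocks _ hblk with hcl | hcyc
      · exact Or.inl hcl
      · by_cases h3 : Nat.card ↥(insert v₀ S) = 3
        · exact Or.inl (cycle3_clique hcyc h3)
        · refine Or.inr ⟨hcyc, ?_⟩
          obtain ⟨m, hm⟩ := hcyc.2.1
          have h5 := hcyc.2.2.1
          omega
    rcases hcl' with hcl | ⟨hcyc, hs4⟩
    · by_cases hBu : (insert v₀ S : Set V) = Set.univ
      · rw [hBu] at hcl
        rw [← hcard]
        exact whole_clique_bound hK hconn hcl hdegK hncomp
      · obtain ⟨w1, hw1⟩ := (Set.ne_univ_iff_exists_notMem _).mp hBu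
        obtain ⟨u, huB, hvu⟩ := gateway_outside_nbr hconn hP hw1
        have hs1 : 1 ≤ S.ncard := (Set.ncard_pos (Set.toFinite _)).mpr hP.nonempty
        have hsumS : ∑ x ∈ S.toFinset, ndeg T x = S.ncard * S.ncard := by
          rw [Finset.sum_congr rfl (fun x hx => clique_ndeg hP hcl (Set.mem_toFinset.mp hx)),
            Finset.sum_const, smul_eq_mul, ← Set.ncard_eq_toFinset_card']
        have hgwS : (T.neighborSet v₀ ∩ S).ncard = S.ncard := by
          rw [clique_gateway hP hcl]
        have huS : u ∉ S := fun h => huB (Set.mem_insert_of_mem _ h)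
        have hsubN : insert u S ⊆ T.neighborSet v₀ := by
          intro z hz
          rcases Set.mem_insert_iff.mp hz with rfl | hzS
          · exact hvu
          · exact hcl (Set.mem_insert _ _) (Set.mem_insert_of_mem _ hzS)
              (fun h => hP.notMem (h ▸ hzS))
        have hcardN : S.ncard + 1 ≤ ndeg T v₀ := by
          have h := Set.ncard_le_ncard hsubN (Set.toFinite _)
          rwa [Set.ncard_insert_of_notMem huS (Set.toFinite _)] at h
        have hsK1 : S.ncard + 1 ≤ K := le_trans hcardN (hdegK v₀)
        by_cases hsK2 : S.ncard + 2 ≤ K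
        · refine peel v₀ S hP (fun F hF => ?_)
          have hFeq : F = S.toFinset := by
            ext x; rw [hF, Set.mem_toFinset]
          rw [hFeq, hsumS, hgwS]
          exact arith_clique_easy hs1 hsK2
        · have hsEq : K = S.ncard + 1 := by omega
          have hNv : T.neighborSet v₀ = insert u S := by
            refine (Set.eq_of_subset_of_ncard_le hsubN ?_ (Set.toFinite _)).symm
            rw [Set.ncard_insert_of_notMem huS (Set.toFinite _)]
            exact le_trans (hdegK v₀) (by omega)
          have hP2 : GoodPair T u (insert v₀ S) := by
            refine ⟨huB, ⟨v₀, Set.mem_insert _ _⟩, insert_conn hP, ?_,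
              ⟨v₀, Set.mem_insert _ _, hvu.symm⟩⟩
            intro x hx y hxy
            rcases Set.mem_insert_iff.mp hx with rfl | hxS
            · have hy : y ∈ insert u S := hNv ▸ (show y ∈ T.neighborSet x from hxy)
              rcases Set.mem_insert_iff.mp hy with rfl | hyS
              · exact Or.inl rfl
              · exact Or.inr (Set.mem_insert_of_mem _ hyS)
            · rcases hP.closed x hxS y hxy with rfl | hyS
              · exact Or.inr (Set.mem_insert _ _)
              · exact Or.inr (Set.mem_insert_of_mem _ hyS)
          have hndv : ndeg T v₀ = S.ncard + 1 := by
            rw [ndeg, hNv, Set.ncard_insert_of_notMem huS (Set.toFinite _)]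
          have hsum2 : ∀ (F : Finset V), (∀ x, x ∈ F ↔ x ∈ insert v₀ S) →
              ∑ x ∈ F, ndeg T x = (S.ncard + 1) + S.ncard * S.ncard := by
            intro F hF
            have hFeq : F = insert v₀ S.toFinset := by
              ext x
              rw [hF x, Finset.mem_insert, Set.mem_toFinset, Set.mem_insert_iff]
            rw [hFeq, Finset.sum_insert (fun h => hP.notMem (Set.mem_toFinset.mp h)),
              hndv, hsumS]
          have hgw2 : (T.neighborSet u ∩ insert v₀ S).ncard = 1 := by
            have heq : T.neighborSet u ∩ insert v₀ S = {v₀} := by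
              ext z
              simp only [Set.mem_inter_iff, mem_neighborSet, Set.mem_singleton_iff]
              constructor
              · rintro ⟨hadj, hz⟩
                rcases Set.mem_insert_iff.mp hz with rfl | hzS
                · rfl
                · rcases hP.closed z hzS u hadj.symm with h | h
                  · exact absurd (Set.mem_insert _ _) (h ▸ huB)
                  · exact absurd (Set.mem_insert_of_mem _ h) huB
              · rintro rfl
                exact ⟨hvu.symm, Set.mem_insert _ _⟩
            rw [heq, Set.ncard_singleton]
          refine peel u (insert v₀ S) hP2 (fun F hF => ?_)
          rw [hsum2 F hF, hgw2,
            Set.ncard_insert_of_notMem hP.notMem (Set.toFinite _), hsEq]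
          exact arith_special
    · by_cases hBu : (insert v₀ S : Set V) = Set.univ
      · rw [hBu] at hcyc
        rw [← hcard]
        exact whole_cycle_bound hK hcyc
      · refine peel v₀ S hP (fun F hF => ?_)
        have hFeq : F = S.toFinset := by
          ext x; rw [hF, Set.mem_toFinset]
        have hsum : ∑ x ∈ S.toFinset, ndeg T x = 2 * S.ncard := by
          rw [Finset.sum_congr rfl (fun x hx => cycle_ndeg hP hcyc (Set.mem_toFinset.mp hx)),
            Finset.sum_const, smul_eq_mul, ← Set.ncard_eq_toFinset_card', mul_comm]
        rw [hFeq, hsum, cycle_gateway hP hcyc]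
        exact arith_cycle_big hK (by omega)

end AT2

/-- for `k ≥ 4` and a Gallai tree `T` with maximum degree at most `k-1`
and `T ≠ K_k`, the average degree satisfies `d(T) < k - 2 + 2/(k-1)`. -/
theorem stmt_2 {V : Type*} [Fintype V] (k : ℕ) (hk : 4 ≤ k) (T : SimpleGraph V)
    (hT : ATPaper.MemTk T k) :
    ATPaper.avgDeg T < (k : ℝ) - 2 + 2 / ((k : ℝ) - 1) := by
  classical
  set K := k - 1 with hKdef
  have hK3 : 3 ≤ K := by omega
  have hk1 : k = K + 1 := by omega
  have hMem' : ATPaper.MemTk T (K+1) := by rw [← hk1]; exact hT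
  have hmain := AT2.main K hK3 (Fintype.card V) V T rfl hMem'
  have hn1 : 1 ≤ Fintype.card V := Fintype.card_pos_iff.mpr hT.1.1.nonempty
  -- edge count vs degree sum
  have hdd : AT2.Dsum T = ∑ x : V, T.degree x :=
    Finset.sum_congr rfl (fun x _ => AT2.ndeg_eq_degree T x)
  have h2 : ∑ x : V, T.degree x = 2 * T.edgeFinset.card :=
    SimpleGraph.sum_degrees_eq_twice_card_edges T
  have h3 : Nat.card T.edgeSet = T.edgeFinset.card := by
    rw [Nat.card_coe_set_eq, Set.ncard_eq_toFinset_card']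
    congr 1
  have hD : 2 * Nat.card T.edgeSet = AT2.Dsum T := by
    rw [h3, hdd, h2]
  have hlt : K * AT2.Dsum T < (K*K - K + 2) * Fintype.card V :=
    lt_of_lt_of_le (by omega) hmain
  have hKpos : (0:ℝ) < (K:ℝ) := by exact_mod_cast (by omega : 0 < K)
  have hnpos : (0:ℝ) < (Fintype.card V : ℝ) := by exact_mod_cast hn1
  have hKK : K ≤ K * K := Nat.le_mul_of_pos_left K (by omega)
  have hRHS : (k:ℝ) - 2 + 2/((k:ℝ)-1) = ((K*K - K + 2 : ℕ) : ℝ)/(K:ℝ) := by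
    have hkK : (k:ℝ) = (K:ℝ) + 1 := by
      rw [hk1]; push_cast; ring
    have hC : ((K*K - K + 2 : ℕ):ℝ) = (K:ℝ)*(K:ℝ) - (K:ℝ) + 2 := by
      push_cast [Nat.cast_sub hKK]
      ring
    rw [hkK, hC]
    field_simp [hKpos.ne']
    ring
  rw [ATPaper.avgDeg, hRHS]
  have hNatV : (Nat.card V : ℝ) = (Fintype.card V : ℝ) := by
    rw [Nat.card_eq_fintype_card]
  rw [hNatV]
  rw [div_lt_div_iff₀ hnpos hKpos]
  have hcast : (2:ℝ) * (Nat.card T.edgeSet : ℝ) = (AT2.Dsum T : ℝ) := by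
    exact_mod_cast hD
  rw [hcast]
  have := hlt
  calc (AT2.Dsum T : ℝ) * (K:ℝ) = ((K * AT2.Dsum T : ℕ) : ℝ) := by push_cast; ring
    _ < (((K*K - K + 2) * Fintype.card V : ℕ) : ℝ) := by exact_mod_cast hlt
    _ = ((K*K - K + 2 : ℕ):ℝ) * (Fintype.card V : ℝ) := by push_cast; ring
end

section
/- For every integer k ≥ 5 and every T ∈ 𝒯_k, we have 2||T|| ≤ (k − 2 + 2/(k−1))·|T| − 2. -/
open scoped Classical

namespace ATProof
open Finset

variable {V : Type*} {T : SimpleGraph V}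

/-- reachability via walks whose support stays in `S` -/
def ReachIn (T : SimpleGraph V) (S : Set V) (u v : V) : Prop :=
  ∃ w : T.Walk u v, ∀ z ∈ w.support, z ∈ S

namespace ReachIn

lemma refl {S : Set V} {u : V} (hu : u ∈ S) : ReachIn T S u u :=
  ⟨SimpleGraph.Walk.nil, by simp [hu]⟩

lemma symm {S : Set V} {u v : V} (h : ReachIn T S u v) : ReachIn T S v u := by
  obtain ⟨w, hw⟩ := h
  exact ⟨w.reverse, by simpa using hw⟩

lemma trans {S : Set V} {u v x : V} (h : ReachIn T S u v) (h' : ReachIn T S v x) :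
    ReachIn T S u x := by
  obtain ⟨w, hw⟩ := h; obtain ⟨w', hw'⟩ := h'
  refine ⟨w.append w', fun z hz => ?_⟩
  rcases (SimpleGraph.Walk.mem_support_append_iff _ _).1 hz with h | h
  · exact hw _ h
  · exact hw' _ h

lemma left_mem {S : Set V} {u v : V} (h : ReachIn T S u v) : u ∈ S := by
  obtain ⟨w, hw⟩ := h; exact hw _ w.start_mem_support

lemma right_mem {S : Set V} {u v : V} (h : ReachIn T S u v) : v ∈ S := by
  obtain ⟨w, hw⟩ := h; exact hw _ w.end_mem_support

lemma step {S : Set V} {u v : V} (h : T.Adj u v) (hu : u ∈ S) (hv : v ∈ S) :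
    ReachIn T S u v :=
  ⟨SimpleGraph.Walk.cons h SimpleGraph.Walk.nil, by simp [hu, hv]⟩

lemma mono {S S' : Set V} (hss : S ⊆ S') {u v : V} (h : ReachIn T S u v) :
    ReachIn T S' u v := by
  obtain ⟨w, hw⟩ := h; exact ⟨w, fun z hz => hss (hw z hz)⟩

end ReachIn

/-- walks in the induced graph give confined reachability -/
lemma reachIn_of_induce_walk {S : Set V} : ∀ {a b : ↥S} (_ : (T.induce S).Walk a b),
    ReachIn T S a b := by
  intro a b w
  induction w with
  | @nil a => exact ReachIn.refl a.2
  | @cons a c b h p ih => exact ReachIn.trans (ReachIn.step h a.2 c.2) ih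

lemma induce_reachable_of_reachIn {S : Set V} {u v : V} (h : ReachIn T S u v) :
    ∀ (hu : u ∈ S) (hv : v ∈ S), (T.induce S).Reachable ⟨u, hu⟩ ⟨v, hv⟩ := by
  obtain ⟨w, hw⟩ := h
  induction w with
  | nil => intro hu hv; exact SimpleGraph.Reachable.refl _
  | @cons a c b h p ih =>
      intro hu hv
      have hc : c ∈ S := hw _ (by simp)
      have hadj : (T.induce S).Adj ⟨a, hu⟩ ⟨c, hc⟩ := h
      exact hadj.reachable.trans (ih (fun z hz => hw _ (by simp [hz])) hc hv)

lemma preconnected_induce_iff {S : Set V} :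
    (T.induce S).Preconnected ↔ ∀ u ∈ S, ∀ v ∈ S, ReachIn T S u v := by
  constructor
  · intro h u hu v hv
    obtain ⟨w⟩ := h ⟨u, hu⟩ ⟨v, hv⟩
    exact reachIn_of_induce_walk w
  · intro h a b
    exact induce_reachable_of_reachIn (h a a.2 b b.2) a.2 b.2

lemma connected_induce_iff {S : Set V} :
    (T.induce S).Connected ↔ S.Nonempty ∧ ∀ u ∈ S, ∀ v ∈ S, ReachIn T S u v := by
  rw [SimpleGraph.connected_iff, preconnected_induce_iff, Set.nonempty_coe_sort, and_comm]


section Counting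
variable [Fintype V] (T)

/-- the finset of a set -/
noncomputable def sfin (S : Set V) : Finset V := Finset.univ.filter (· ∈ S)

/-- twice the number of edges inside `S`: ordered adjacent pairs in `S` -/
noncomputable def nd (S : Set V) : ℕ :=
  (Finset.univ.filter fun p : V × V => p.1 ∈ S ∧ p.2 ∈ S ∧ T.Adj p.1 p.2).card

/-- degree of `x` into `S` -/
noncomputable def dS (S : Set V) (x : V) : ℕ :=
  (Finset.univ.filter fun u => u ∈ S ∧ T.Adj x u).card

variable {T}

@[simp] lemma mem_sfin {S : Set V} {u : V} : u ∈ sfin S ↔ u ∈ S := by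
  simp [sfin]

lemma card_sfin (S : Set V) : (sfin S).card = S.ncard := by
  rw [Set.ncard_eq_toFinset_card']
  congr 1; ext u; simp

lemma sfin_insert {S : Set V} {x : V} : sfin (insert x S) = insert x (sfin S) := by
  ext u; simp

lemma dS_eq_natCard (S : Set V) (x : V) :
    dS T S x = Nat.card {u : V | u ∈ S ∧ T.Adj x u} := by
  rw [Nat.card_coe_set_eq, Set.ncard_eq_toFinset_card', dS]
  congr 1; ext u; simp

lemma dS_le_degree (S : Set V) (x : V) : dS T S x ≤ T.degree x := by
  classical
  rw [← SimpleGraph.card_neighborSet_eq_degree, ← Nat.card_eq_fintype_card,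
    Nat.card_coe_set_eq, Set.ncard_eq_toFinset_card', dS]
  apply Finset.card_le_card
  intro u hu
  simp only [mem_filter] at hu ⊢
  simp only [Set.mem_toFinset, SimpleGraph.mem_neighborSet]
  exact hu.2.2

lemma dS_mono {S S' : Set V} (h : S ⊆ S') (x : V) : dS T S x ≤ dS T S' x := by
  apply Finset.card_le_card
  intro u hu
  simp only [mem_filter, mem_univ, true_and] at hu ⊢
  exact ⟨h hu.1, hu.2⟩

lemma dS_le_one_unique {S' : Set V} {x u y : V} (h : dS T S' x ≤ 1)
    (hu : u ∈ S') (hau : T.Adj x u) (hy : y ∈ S') (hay : T.Adj x y) : u = y := by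
  rw [dS] at h
  exact Finset.card_le_one.1 h u
    (Finset.mem_filter.2 ⟨Finset.mem_univ u, hu, hau⟩) y
    (Finset.mem_filter.2 ⟨Finset.mem_univ y, hy, hay⟩)

lemma dS_split {S₁ S₂ : Set V} {x : V}
    (hI : ∀ z, z ∈ S₁ → z ∈ S₂ → z = x) :
    dS T (S₁ ∪ S₂) x = dS T S₁ x + dS T S₂ x := by
  have hd : Disjoint (Finset.univ.filter fun u => u ∈ S₁ ∧ T.Adj x u)
      (Finset.univ.filter fun u => u ∈ S₂ ∧ T.Adj x u) := by
    rw [Finset.disjoint_left]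
    intro u hu1 hu2
    simp only [mem_filter, mem_univ, true_and] at hu1 hu2
    exact T.irrefl ((hI u hu1.1 hu2.1) ▸ hu1.2)
  rw [dS, dS, dS, ← Finset.card_union_of_disjoint hd]
  congr 1
  ext u
  simp only [mem_filter, Finset.mem_union, Set.mem_union, mem_univ, true_and]
  tauto

lemma nd_eq_sum (S : Set V) : nd T S = ∑ v ∈ sfin S, dS T S v := by
  rw [nd]
  rw [Finset.card_eq_sum_card_fiberwise (f := Prod.fst) (t := sfin S)
    (fun p hp => by simp only [Finset.mem_coe, mem_filter] at hp; simpa using hp.2.1)]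
  refine Finset.sum_congr rfl fun v hv => ?_
  rw [dS]
  have hvS : v ∈ S := by simpa using hv
  apply Finset.card_nbij' (fun p => p.2) (fun u => (v, u))
  · intro p hp; simp only [mem_filter, mem_univ, true_and, Finset.coe_filter,
      Set.mem_setOf_eq] at hp ⊢
    rcases hp with ⟨⟨h1, h2, h3⟩, h4⟩; exact ⟨h2, h4 ▸ h3⟩
  · intro u hu
    simp only [mem_filter, mem_univ, true_and, Finset.coe_filter, Set.mem_setOf_eq,
      mem_sfin] at hu ⊢
    exact ⟨⟨hvS, hu.1, hu.2⟩, trivial⟩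
  · intro p hp
    simp only [mem_filter, mem_univ, true_and, Finset.coe_filter, Set.mem_setOf_eq] at hp
    exact Prod.ext hp.2.symm rfl
  · intro u hu
    rfl

lemma nd_split {S₁ S₂ : Set V} {x : V}
    (hI : ∀ z, z ∈ S₁ → z ∈ S₂ → z = x)
    (hedge : ∀ u v, T.Adj u v → u ∈ S₁ ∪ S₂ → v ∈ S₁ ∪ S₂ →
      (u ∈ S₁ ∧ v ∈ S₁) ∨ (u ∈ S₂ ∧ v ∈ S₂)) :
    nd T (S₁ ∪ S₂) = nd T S₁ + nd T S₂ := by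
  have hd : Disjoint
      (Finset.univ.filter fun p : V × V => p.1 ∈ S₁ ∧ p.2 ∈ S₁ ∧ T.Adj p.1 p.2)
      (Finset.univ.filter fun p : V × V => p.1 ∈ S₂ ∧ p.2 ∈ S₂ ∧ T.Adj p.1 p.2) := by
    rw [Finset.disjoint_left]
    intro p hp1 hp2
    simp only [mem_filter, mem_univ, true_and] at hp1 hp2
    have e1 : p.1 = x := hI _ hp1.1 hp2.1
    have e2 : p.2 = x := hI _ hp1.2.1 hp2.2.1
    exact T.irrefl (e1 ▸ e2 ▸ hp1.2.2)
  rw [nd, nd, nd, ← Finset.card_union_of_disjoint hd]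
  congr 1
  ext p
  simp only [mem_filter, Finset.mem_union, mem_univ, true_and]
  constructor
  · rintro ⟨h1, h2, h3⟩
    rcases hedge p.1 p.2 h3 h1 h2 with ⟨a, b⟩ | ⟨a, b⟩
    · exact Or.inl ⟨a, b, h3⟩
    · exact Or.inr ⟨a, b, h3⟩
  · rintro (⟨h1, h2, h3⟩ | ⟨h1, h2, h3⟩)
    · exact ⟨Or.inl h1, Or.inl h2, h3⟩
    · exact ⟨Or.inr h1, Or.inr h2, h3⟩

lemma dS_insert_self {S : Set V} {x : V} : dS T (insert x S) x = dS T S x := by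
  rw [dS, dS]; congr 1; ext u
  simp only [mem_filter, mem_univ, true_and, Set.mem_insert_iff]
  constructor
  · rintro ⟨h1 | h1, h2⟩
    · exact absurd (h1 ▸ h2) (T.irrefl)
    · exact ⟨h1, h2⟩
  · rintro ⟨h1, h2⟩; exact ⟨Or.inr h1, h2⟩

lemma dS_insert {S : Set V} {x : V} (hx : x ∉ S) (v : V) :
    dS T (insert x S) v = dS T S v + if T.Adj v x then 1 else 0 := by
  rw [dS, dS]
  split_ifs with hadj
  · rw [← Finset.card_insert_of_notMem
      (show x ∉ Finset.univ.filter (fun u => u ∈ S ∧ T.Adj v u) by simp [hx])]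
    congr 1
    ext u
    simp only [mem_filter, mem_univ, true_and, Set.mem_insert_iff, Finset.mem_insert]
    constructor
    · rintro ⟨h1 | h1, h2⟩
      · exact Or.inl h1
      · exact Or.inr ⟨h1, h2⟩
    · rintro (rfl | ⟨h1, h2⟩)
      · exact ⟨Or.inl rfl, hadj⟩
      · exact ⟨Or.inr h1, h2⟩
  · simp only [add_zero]
    congr 1; ext u
    simp only [mem_filter, mem_univ, true_and, Set.mem_insert_iff]
    constructor
    · rintro ⟨h1 | h1, h2⟩
      · exact absurd (h1 ▸ h2) hadj
      · exact ⟨h1, h2⟩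
    · rintro ⟨h1, h2⟩; exact ⟨Or.inr h1, h2⟩

lemma nd_insert {S : Set V} {x : V} (hx : x ∉ S) :
    nd T (insert x S) = nd T S + 2 * dS T S x := by
  have hxtf : x ∉ sfin S := by simpa using hx
  rw [nd_eq_sum, sfin_insert, Finset.sum_insert hxtf, dS_insert_self]
  have hsum : ∑ v ∈ sfin S, dS T (insert x S) v
      = ∑ v ∈ sfin S, (dS T S v + if T.Adj v x then 1 else 0) :=
    Finset.sum_congr rfl fun v _ => dS_insert hx v
  rw [hsum, Finset.sum_add_distrib, ← nd_eq_sum, Finset.sum_boole]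
  have hcard : (Finset.filter (fun v => T.Adj v x) (sfin S)).card = dS T S x := by
    rw [dS]; apply Finset.card_nbij' id id
    · intro a ha; simp only [mem_filter, mem_univ, true_and,
        Finset.coe_filter, Set.mem_setOf_eq, mem_sfin] at ha ⊢
      exact ⟨ha.1, ha.2.symm⟩
    · intro a ha; simp only [mem_filter, mem_univ, true_and,
        Finset.coe_filter, Set.mem_setOf_eq, mem_sfin] at ha ⊢
      exact ⟨ha.1, ha.2.symm⟩
    · intro _ _; rfl
    · intro _ _; rfl
  rw [hcard]; push_cast; ring

lemma dS_clique {S : Set V} (hcl : T.IsClique S) {v : V} (hv : v ∈ S) :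
    dS T S v = S.ncard - 1 := by
  rw [dS, ← card_sfin]
  have : (Finset.univ.filter fun u => u ∈ S ∧ T.Adj v u) = (sfin S).erase v := by
    ext u
    simp only [mem_filter, mem_univ, true_and, Finset.mem_erase, mem_sfin]
    constructor
    · rintro ⟨h1, h2⟩; exact ⟨h2.ne', h1⟩
    · rintro ⟨h1, h2⟩; exact ⟨h2, hcl hv h2 (Ne.symm h1)⟩
  rw [this, Finset.card_erase_of_mem (by simpa using hv)]

lemma nd_clique {S : Set V} (hcl : T.IsClique S) :
    nd T S = S.ncard * (S.ncard - 1) := by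
  rw [nd_eq_sum]
  rw [Finset.sum_congr rfl fun v hv => dS_clique hcl (by simpa using hv)]
  rw [Finset.sum_const, smul_eq_mul, card_sfin]

lemma nd_cycle {S : Set V} (h2 : ∀ v ∈ S, dS T S v = 2) :
    nd T S = 2 * S.ncard := by
  rw [nd_eq_sum]
  rw [Finset.sum_congr rfl fun v hv => h2 v (by simpa using hv)]
  rw [Finset.sum_const, smul_eq_mul, card_sfin, mul_comm]

lemma dS_univ (v : V) : dS T Set.univ v = T.degree v := by
  classical
  rw [dS, ← SimpleGraph.card_neighborSet_eq_degree, ← Nat.card_eq_fintype_card,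
    Nat.card_coe_set_eq, Set.ncard_eq_toFinset_card']
  congr 1; ext u; simp

lemma nd_univ : nd T Set.univ = 2 * T.edgeFinset.card := by
  classical
  have h1 : sfin (Set.univ : Set V) = Finset.univ := by ext u; simp
  rw [nd_eq_sum, h1]
  rw [Finset.sum_congr rfl fun v _ => dS_univ v]
  exact SimpleGraph.sum_degrees_eq_twice_card_edges T


end Counting

section Structural
variable {S : Set V} {x a : V}

/-- connected induced subgraph with no cut vertex -/
def blockish (T : SimpleGraph V) (B : Set V) : Prop :=
  (T.induce B).Connected ∧ ∀ v ∈ B, (T.induce (B \ {v})).Preconnected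

lemma blockish_nonempty {B : Set V} (h : blockish T B) : B.Nonempty := by
  have := h.1.nonempty
  rwa [Set.nonempty_coe_sort] at this

lemma preconnected_of_subsingleton {B : Set V} (h : B.Subsingleton) :
    (T.induce B).Preconnected := by
  rw [preconnected_induce_iff]
  intro u hu v hv
  rw [h hu hv]
  exact ReachIn.refl hv

lemma pair_blockish {u v : V} (h : T.Adj u v) : blockish T {u, v} := by
  constructor
  · rw [connected_induce_iff]
    refine ⟨⟨u, Or.inl rfl⟩, ?_⟩
    rintro z (rfl | rfl) w (rfl | rfl)
    · exact ReachIn.refl (Or.inl rfl)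
    · exact ReachIn.step h (Or.inl rfl) (Or.inr rfl)
    · exact ReachIn.step h.symm (Or.inr rfl) (Or.inl rfl)
    · exact ReachIn.refl (Or.inr rfl)
  · intro z hz
    apply preconnected_of_subsingleton
    intro p hp q hq
    rcases hp with ⟨hp1 | hp1, hp2⟩ <;> rcases hq with ⟨hq1 | hq1, hq2⟩ <;>
      simp_all <;> rcases hz with rfl | rfl <;> simp_all

lemma exists_adj_of_reachIn {S' : Set V} {u v : V} (h : ReachIn T S' u v) (hne : u ≠ v) :
    ∃ c ∈ S', T.Adj u c := by
  obtain ⟨w, hw⟩ := h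
  cases w with
  | nil => exact absurd rfl hne
  | cons hadj p => exact ⟨_, hw _ (by simp), hadj⟩

/-- the reachability component of `a` in `S \ {x}` -/
def comp (T : SimpleGraph V) (S : Set V) (x a : V) : Set V :=
  {v | ReachIn T (S \ {x}) a v}

lemma comp_subset : comp T S x a ⊆ S \ {x} := fun _ h => ReachIn.right_mem h

lemma self_mem_comp (ha : a ∈ S) (hax : a ≠ x) : a ∈ comp T S x a :=
  ReachIn.refl ⟨ha, hax⟩

lemma comp_closure {u v : V} (hu : u ∈ comp T S x a) (hv : v ∈ S) (hvx : v ≠ x)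
    (hadj : T.Adj u v) : v ∈ comp T S x a :=
  ReachIn.trans hu (ReachIn.step hadj (comp_subset hu) ⟨hv, hvx⟩)

lemma reachIn_comp {v : V} (hv : v ∈ comp T S x a) : ReachIn T (comp T S x a) a v := by
  obtain ⟨w, hw⟩ := hv
  refine ⟨w, fun z hz => ?_⟩
  exact ⟨w.takeUntil z hz, fun z' hz' => hw _ (w.support_takeUntil_subset hz hz')⟩

lemma comp_connected (ha : a ∈ S) (hax : a ≠ x) : (T.induce (comp T S x a)).Connected := by
  rw [connected_induce_iff]
  refine ⟨⟨a, self_mem_comp ha hax⟩, fun u hu v hv => ?_⟩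
  exact ReachIn.trans (ReachIn.symm (reachIn_comp hu)) (reachIn_comp hv)

lemma unreachable_of_cut (hcut : ¬ (T.induce (S \ {x})).Preconnected)
    (ha : a ∈ S) (hax : a ≠ x) :
    ∃ b, b ∈ S ∧ b ≠ x ∧ ¬ ReachIn T (S \ {x}) a b := by
  by_contra hcon
  push_neg at hcon
  apply hcut
  rw [preconnected_induce_iff]
  intro u hu v hv
  exact ReachIn.trans (ReachIn.symm (hcon u hu.1 hu.2)) (hcon v hv.1 hv.2)

lemma exists_cut_pair (hcut : ¬ (T.induce (S \ {x})).Preconnected) :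
    ∃ a, a ∈ S ∧ a ≠ x ∧ ∃ b, b ∈ S ∧ b ≠ x ∧ ¬ ReachIn T (S \ {x}) a b := by
  rw [preconnected_induce_iff] at hcut
  push_neg at hcut
  obtain ⟨u, hu, v, hv, h⟩ := hcut
  exact ⟨u, hu.1, hu.2, v, hv.1, hv.2, h⟩

end Structural

section Split
variable {S : Set V} {x a : V}

lemma x_not_mem_comp : x ∉ comp T S x a := fun h => (comp_subset h).2 rfl

lemma exists_adj_comp (hSconn : (T.induce S).Connected) (hxS : x ∈ S)
    (haS : a ∈ S) (hax : a ≠ x)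
    {b : V} (hbS : b ∈ S) (hbA : b ∉ comp T S x a) :
    ∃ y ∈ comp T S x a, T.Adj x y := by
  have hreach : ReachIn T S a b := by
    rw [connected_induce_iff] at hSconn
    exact hSconn.2 a haS b hbS
  obtain ⟨w, hw⟩ := hreach
  obtain ⟨d, hd, hdf, hds⟩ := w.exists_boundary_dart (comp T S x a) (self_mem_comp haS hax) hbA
  have hsnd : d.snd ∈ S := hw _ (w.dart_snd_mem_support_of_mem_darts hd)
  have : d.snd = x := by
    by_contra hne
    exact hds (comp_closure hdf hsnd hne d.adj)
  exact ⟨d.fst, hdf, this ▸ d.adj.symm⟩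

lemma S1_connected (hxS : x ∈ S) (haS : a ∈ S) (hax : a ≠ x)
    {y : V} (hyA : y ∈ comp T S x a) (hxy : T.Adj x y) :
    (T.induce (insert x (comp T S x a))).Connected := by
  rw [connected_induce_iff]
  have hsub : comp T S x a ⊆ insert x (comp T S x a) := Set.subset_insert _ _
  have hto : ∀ v ∈ insert x (comp T S x a), ReachIn T (insert x (comp T S x a)) v a := by
    rintro v (rfl | hv)
    · exact ReachIn.trans (ReachIn.step hxy (Or.inl rfl) (Or.inr hyA))
        (ReachIn.mono hsub (ReachIn.symm (reachIn_comp hyA)))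
    · exact ReachIn.mono hsub (ReachIn.symm (reachIn_comp hv))
  exact ⟨⟨a, Or.inr (self_mem_comp haS hax)⟩,
    fun u hu v hv => ReachIn.trans (hto u hu) (ReachIn.symm (hto v hv))⟩

lemma walk_reach_x {A : Set V} (hxS : x ∈ S)
    (hclos : ∀ u' v', u' ∈ A → v' ∈ S → v' ≠ x → T.Adj u' v' → v' ∈ A) :
    ∀ {v w : V} (p : T.Walk v w), w ∈ A → (∀ z ∈ p.support, z ∈ S) → v ∉ A →
      ReachIn T (S \ A) v x := by
  intro v w p
  induction p with
  | nil =>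
      intro hwA _ hv
      exact absurd hwA hv
  | @cons u c _ hadj p ih =>
      intro hwA hw hv
      have huS : u ∈ S := hw _ (by simp)
      have hcS : c ∈ S := hw _ (by simp)
      by_cases hcA : c ∈ A
      · by_cases hux : u = x
        · subst hux
          exact ReachIn.refl ⟨huS, hv⟩
        · exact absurd (hclos c u hcA huS hux hadj.symm) hv
      · exact ReachIn.trans
          (ReachIn.step hadj ⟨huS, hv⟩ ⟨hcS, hcA⟩)
          (ih hwA (fun z hz => hw _ (by simp [hz])) hcA)

lemma S2_connected (hSconn : (T.induce S).Connected) (hxS : x ∈ S)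
    (haS : a ∈ S) (hax : a ≠ x) :
    (T.induce (S \ comp T S x a)).Connected := by
  rw [connected_induce_iff]
  have hxmem : x ∈ S \ comp T S x a := ⟨hxS, x_not_mem_comp⟩
  have hto : ∀ v ∈ S \ comp T S x a, ReachIn T (S \ comp T S x a) v x := by
    rintro v ⟨hvS, hvA⟩
    have : ReachIn T S v a := by
      rw [connected_induce_iff] at hSconn
      exact hSconn.2 v hvS a haS
    obtain ⟨w, hw⟩ := this
    exact walk_reach_x hxS (fun u' v' h1 h2 h3 h4 => comp_closure h1 h2 h3 h4) w
      (self_mem_comp haS hax) hw hvA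
  exact ⟨⟨x, hxmem⟩, fun u hu v hv => ReachIn.trans (hto u hu) (ReachIn.symm (hto v hv))⟩

/-- any blockish set inside `S` meeting the component `A` is contained in `A ∪ {x}` -/
lemma confinement {C : Set V} (hCS : C ⊆ S) (hC : blockish T C)
    {c₀ : V} (hc₀C : c₀ ∈ C) (hc₀A : c₀ ∈ comp T S x a) :
    C ⊆ insert x (comp T S x a) := by
  intro c₁ hc₁
  by_contra hc₁n
  have hc₁x : c₁ ≠ x := fun h => hc₁n (h ▸ Or.inl rfl)
  have hc₁A : c₁ ∉ comp T S x a := fun h => hc₁n (Or.inr h)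
  have hc₀x : c₀ ≠ x := (comp_subset hc₀A).2
  have hreach : ReachIn T (C \ {x}) c₀ c₁ := by
    by_cases hxC : x ∈ C
    · have := hC.2 x hxC
      rw [preconnected_induce_iff] at this
      exact this c₀ ⟨hc₀C, hc₀x⟩ c₁ ⟨hc₁, hc₁x⟩
    · have := hC.1.preconnected
      rw [preconnected_induce_iff] at this
      have h := this c₀ hc₀C c₁ hc₁
      exact ReachIn.mono
        (fun z (hz : z ∈ C) => show z ∈ C \ {x} from ⟨hz, fun he => hxC (he ▸ hz)⟩) h
  have : ReachIn T (S \ {x}) c₀ c₁ :=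
    ReachIn.mono (fun z (hz : z ∈ C \ {x}) => show z ∈ S \ {x} from ⟨hCS hz.1, hz.2⟩) hreach
  exact hc₁A (ReachIn.trans hc₀A this)

lemma confinement2 {C : Set V} (hCS : C ⊆ S) (hC : blockish T C)
    {c₀ : V} (hc₀C : c₀ ∈ C) (hc₀ : c₀ ∈ S \ comp T S x a) (hc₀x : c₀ ≠ x) :
    C ⊆ S \ comp T S x a := by
  intro c₁ hc₁
  refine ⟨hCS hc₁, fun hc₁A => ?_⟩
  have := confinement hCS hC hc₁ hc₁A hc₀C
  rcases this with rfl | hA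
  · exact hc₀x rfl
  · exact hc₀.2 hA

end Split

section Blocks
variable {S : Set V} {x a : V}

/-- every maximal blockish subset of `S` is a clique or an odd-cycle-like set -/
def blocksGood (T : SimpleGraph V) (S : Set V) : Prop :=
  ∀ B : Set V, B ⊆ S → blockish T B →
    (∀ C : Set V, B ⊆ C → C ⊆ S → blockish T C → C = B) →
    T.IsClique B ∨ (3 ≤ B.ncard ∧ ∀ v ∈ B, Nat.card {u : V | u ∈ B ∧ T.Adj v u} = 2)

lemma blocksGood_S1 (hbg : blocksGood T S) (hxS : x ∈ S)
    {y : V} (hyA : y ∈ comp T S x a) (hxy : T.Adj x y) :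
    blocksGood T (insert x (comp T S x a)) := by
  have hS1S : insert x (comp T S x a) ⊆ S := by
    rintro z (rfl | hz)
    · exact hxS
    · exact (comp_subset hz).1
  intro B hBS1 hBb hBmax
  refine hbg B (hBS1.trans hS1S) hBb ?_
  intro C hBC hCS hCb
  by_cases hBA : ∃ c₀ ∈ B, c₀ ∈ comp T S x a
  · obtain ⟨c₀, hc₀B, hc₀A⟩ := hBA
    exact hBmax C hBC (confinement hCS hCb (hBC hc₀B) hc₀A) hCb
  · exfalso
    push_neg at hBA
    have hBx : B ⊆ {x} := by
      intro z hz
      rcases hBS1 hz with rfl | hzA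
      · rfl
      · exact absurd hzA (hBA z hz)
    have hpair := hBmax {x, y} (hBx.trans (by intro z hz; exact hz ▸ Or.inl rfl))
      (Set.pair_subset (Or.inl rfl) (Or.inr hyA))
      (pair_blockish hxy)
    have : y ∈ B := hpair ▸ Or.inr rfl
    have : y = x := hBx this
    exact T.irrefl (this ▸ hxy.symm)

lemma blocksGood_S2 (hbg : blocksGood T S) (hSconn : (T.induce S).Connected)
    (hxS : x ∈ S) (haS : a ∈ S) (hax : a ≠ x)
    {b : V} (hbS : b ∈ S) (hbx : b ≠ x) (hbA : b ∉ comp T S x a) :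
    blocksGood T (S \ comp T S x a) := by
  intro B hBS2 hBb hBmax
  refine hbg B (hBS2.trans Set.diff_subset) hBb ?_
  intro C hBC hCS hCb
  by_cases hBA : ∃ c₀ ∈ B, c₀ ≠ x
  · obtain ⟨c₀, hc₀B, hc₀x⟩ := hBA
    exact hBmax C hBC (confinement2 hCS hCb (hBC hc₀B) (hBS2 hc₀B) hc₀x) hCb
  · exfalso
    push_neg at hBA
    -- B ⊆ {x}; get a neighbor of x inside S \ A
    have hS2conn := S2_connected hSconn hxS haS hax
    rw [connected_induce_iff] at hS2conn
    have hxS2 : x ∈ S \ comp T S x a := ⟨hxS, x_not_mem_comp⟩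
    have hbS2 : b ∈ S \ comp T S x a := ⟨hbS, hbA⟩
    have hreach : ReachIn T (S \ comp T S x a) x b := hS2conn.2 x hxS2 b hbS2
    obtain ⟨c, hcS2, hxc⟩ := exists_adj_of_reachIn hreach (Ne.symm hbx)
    have hpair := hBmax {x, c}
      (fun z hz => (hBA z hz) ▸ Or.inl rfl)
      (Set.pair_subset hxS2 hcS2)
      (pair_blockish hxc)
    have : c ∈ B := hpair ▸ Or.inr rfl
    exact T.irrefl ((hBA c this) ▸ hxc)

lemma blocksGood_comp (hbg : blocksGood T S) (hxS : x ∈ S)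
    {y : V} (hyA : y ∈ comp T S x a)
    (huniq : ∀ u ∈ insert x (comp T S x a), T.Adj x u → u = y)
    (h2 : ∃ z ∈ comp T S x a, z ≠ y) :
    blocksGood T (comp T S x a) := by
  have hAS : comp T S x a ⊆ S := fun z hz => (comp_subset hz).1
  intro B hBA hBb hBmax
  refine hbg B (hBA.trans hAS) hBb ?_
  intro C hBC hCS hCb
  obtain ⟨c₀, hc₀B⟩ := blockish_nonempty hBb
  have hCsub : C ⊆ insert x (comp T S x a) :=
    confinement hCS hCb (hBC hc₀B) (hBA hc₀B)
  by_cases hxC : x ∈ C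
  · exfalso
    have hyx : y ≠ x := fun h => (comp_subset (h ▸ hyA)).2 rfl
    by_cases hCxy : ∀ z ∈ C, z = x ∨ z = y
    · -- B = {y}
      have hBy : B ⊆ {y} := by
        intro z hz
        rcases hCxy z (hBC hz) with rfl | rfl
        · exact absurd (hBA hz) x_not_mem_comp
        · rfl
      obtain ⟨z, hzA, hzy⟩ := h2
      have hyB : y ∈ B := by
        obtain ⟨w, hwB⟩ := blockish_nonempty hBb
        have := hBy hwB
        rwa [this] at hwB
      -- find neighbor of y in A
      have hreach : ReachIn T (comp T S x a) y z :=
        ReachIn.trans (ReachIn.symm (reachIn_comp (hBA hyB))) (reachIn_comp hzA)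
      obtain ⟨y', hy'A, hyy'⟩ := exists_adj_of_reachIn hreach (Ne.symm hzy)
      have hpair := hBmax {y, y'}
        (fun w hw => (hBy hw) ▸ Or.inl rfl)
        (Set.pair_subset (hBA hyB) hy'A)
        (pair_blockish hyy')
      have : y' ∈ B := hpair ▸ Or.inr rfl
      exact T.irrefl ((show y' = y from hBy this) ▸ hyy')
    · push_neg at hCxy
      obtain ⟨z, hzC, hzx, hzy⟩ := hCxy
      have hpre : (T.induce (C \ {y})).Preconnected := by
        by_cases hyC : y ∈ C
        · exact hCb.2 y hyC
        · rw [Set.diff_singleton_eq_self hyC]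
          exact hCb.1.preconnected
      rw [preconnected_induce_iff] at hpre
      have hreach : ReachIn T (C \ {y}) x z := hpre x ⟨hxC, hyx.symm⟩ z ⟨hzC, hzy⟩
      obtain ⟨c, hc, hxc⟩ := exists_adj_of_reachIn hreach (Ne.symm hzx)
      exact hc.2 (huniq c (hCsub hc.1) hxc)
  · have : C ⊆ comp T S x a := by
      intro z hz
      rcases hCsub hz with rfl | hzA
      · exact absurd hz hxC
      · exact hzA
    exact hBmax C hBC this hCb

end Blocks

section Arith

/-- the constant `k - 2 + 2/(k-1)` -/
noncomputable def cst (k : ℕ) : ℝ := (k : ℝ) - 2 + 2 / ((k : ℝ) - 1)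

variable {k : ℕ} (hk : 5 ≤ k)
include hk

lemma hk_real : (5 : ℝ) ≤ (k : ℝ) := by exact_mod_cast hk

lemma hkm1_pos : (0 : ℝ) < (k : ℝ) - 1 := by have := hk_real hk; linarith

lemma cst_ge_three : 3 ≤ cst k := by
  have h1 := hk_real hk
  have h2 := hkm1_pos hk
  have : 0 < 2 / ((k : ℝ) - 1) := by positivity
  rw [cst]; linarith

lemma ineq_cliqueA {m : ℕ} (hm1 : 1 ≤ m) (hmk : m ≤ k - 1) :
    ((m * (m - 1) : ℕ) : ℝ) ≤ cst k * m - 2 := by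
  have h2 := hkm1_pos hk
  have hm1' : (1 : ℝ) ≤ (m : ℝ) := by exact_mod_cast hm1
  have hmk' : (m : ℝ) ≤ (k : ℝ) - 1 := by
    have : (m : ℝ) ≤ ((k - 1 : ℕ) : ℝ) := by exact_mod_cast hmk
    rwa [Nat.cast_sub (by omega), Nat.cast_one] at this
  have hcast : ((m * (m - 1) : ℕ) : ℝ) = (m : ℝ) * ((m : ℝ) - 1) := by
    rw [Nat.cast_mul, Nat.cast_sub hm1, Nat.cast_one]
  rw [hcast]
  have key : cst k * m - 2 - (m : ℝ) * ((m : ℝ) - 1)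
      = (((k : ℝ) - 1) - m) * ((m : ℝ) - 2 / ((k : ℝ) - 1)) := by
    rw [cst]; field_simp; ring
  have h3 : 2 / ((k : ℝ) - 1) ≤ 1 := by
    rw [div_le_one h2]; linarith [hk_real hk]
  nlinarith [mul_nonneg (by linarith : (0:ℝ) ≤ ((k : ℝ) - 1) - m)
    (by linarith : (0:ℝ) ≤ (m : ℝ) - 2 / ((k : ℝ) - 1))]

lemma ineq_cliqueB {m : ℕ} (hm1 : 1 ≤ m) (hmk : m ≤ k - 2) :
    ((m * (m - 1) : ℕ) : ℝ) ≤ cst k * m - cst k := by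
  have h2 := hkm1_pos hk
  have hm1' : (1 : ℝ) ≤ (m : ℝ) := by exact_mod_cast hm1
  have hmk' : (m : ℝ) ≤ (k : ℝ) - 2 := by
    have : (m : ℝ) ≤ ((k - 2 : ℕ) : ℝ) := by exact_mod_cast hmk
    rwa [Nat.cast_sub (by omega), Nat.cast_ofNat] at this
  have hcast : ((m * (m - 1) : ℕ) : ℝ) = (m : ℝ) * ((m : ℝ) - 1) := by
    rw [Nat.cast_mul, Nat.cast_sub hm1, Nat.cast_one]
  rw [hcast]
  have hcm : (m : ℝ) ≤ cst k := by
    have : 0 < 2 / ((k : ℝ) - 1) := by positivity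
    rw [cst]; linarith
  nlinarith [mul_nonneg (by linarith : (0:ℝ) ≤ cst k - m) (by linarith : (0:ℝ) ≤ (m : ℝ) - 1)]

lemma ineq_cycleA {m : ℕ} (hm : 3 ≤ m) :
    ((2 * m : ℕ) : ℝ) ≤ cst k * m - 2 := by
  have hc := cst_ge_three hk
  have hm' : (3 : ℝ) ≤ (m : ℝ) := by exact_mod_cast hm
  have hcast : ((2 * m : ℕ) : ℝ) = 2 * (m : ℝ) := by push_cast; ring
  rw [hcast]
  nlinarith [mul_le_mul_of_nonneg_right (by linarith : (3:ℝ) ≤ cst k) (by linarith : (0:ℝ) ≤ (m:ℝ))]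

lemma ineq_cycleB {m : ℕ} (hm : 3 ≤ m) :
    ((2 * m : ℕ) : ℝ) ≤ cst k * m - cst k := by
  have hc := cst_ge_three hk
  have hm' : (3 : ℝ) ≤ (m : ℝ) := by exact_mod_cast hm
  have hcast : ((2 * m : ℕ) : ℝ) = 2 * (m : ℝ) := by push_cast; ring
  rw [hcast]
  nlinarith [mul_le_mul_of_nonneg_left (by linarith : (3:ℝ) ≤ (m:ℝ)) (by linarith : (0:ℝ) ≤ cst k - 2)]

end Arith

section Main
variable [Fintype V] {T : SimpleGraph V} {k : ℕ} {S : Set V}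

/-- no `(k-1)`-clique inside `S` contains `r` -/
def free (T : SimpleGraph V) (k : ℕ) (S : Set V) (r : V) : Prop :=
  ∀ Q : Finset V, ↑Q ⊆ S → T.IsNClique (k-1) Q → r ∉ Q

lemma free_mono {S' : Set V} (h : S' ⊆ S) {r : V} (hf : free T k S r) : free T k S' r :=
  fun Q hQ hQc => hf Q (fun z hz => h (hQ hz)) hQc

lemma coe_sfin (S : Set V) : (↑(sfin S) : Set V) = S := by ext z; simp

lemma no_Kk (hTconn : T.Connected) (hdeg : ∀ v, T.degree v ≤ k - 1)
    (hNK : ¬ ATPaper.IsCompleteK T k) (hcl : T.IsClique S) (hcard : S.ncard = k)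
    (hk : 5 ≤ k) : False := by
  have hSne : S.Nonempty := by
    rw [← Set.ncard_pos]; omega
  have hnb : ∀ v ∈ S, T.neighborSet v = S \ {v} := by
    intro v hv
    refine (Set.eq_of_subset_of_ncard_le ?_ ?_ (Set.toFinite _)).symm
    · intro u hu
      exact hcl hv hu.1 (Ne.symm hu.2)
    · have h1 : (T.neighborSet v).ncard = T.degree v := by
        rw [← Nat.card_coe_set_eq, Nat.card_eq_fintype_card,
          SimpleGraph.card_neighborSet_eq_degree]
      have h2 : (S \ {v}).ncard = k - 1 := by
        rw [Set.ncard_diff_singleton_of_mem hv, hcard]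
      rw [h1, h2]
      exact hdeg v
  have hwalk : ∀ {u w : V} (_ : T.Walk u w), u ∈ S → w ∈ S := by
    intro u w p
    induction p with
    | nil => exact id
    | @cons u' c _ hadj p ih =>
        intro hu
        apply ih
        have h2 : c ∈ T.neighborSet u' := hadj
        rw [hnb u' hu] at h2
        exact h2.1
  obtain ⟨v₀, hv₀⟩ := hSne
  have hall : ∀ w, w ∈ S := fun w => hwalk (hTconn v₀ w).some hv₀
  have huniv : S = Set.univ := Set.eq_univ_of_forall hall
  have hcardV : Fintype.card V = k := by
    rw [← Nat.card_eq_fintype_card, ← Set.ncard_univ, ← huniv, hcard]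
  apply hNK
  refine ⟨⟨Fintype.equivFinOfCardEq hcardV, ?_⟩⟩
  intro p q
  simp only [SimpleGraph.top_adj, ne_eq, EmbeddingLike.apply_eq_iff_eq]
  constructor
  · intro hne
    exact hcl (hall p) (hall q) hne
  · intro hadj
    exact hadj.ne

/-- the terminal (2-connected) case of the induction -/
lemma terminal (hTconn : T.Connected) (hdeg : ∀ v, T.degree v ≤ k - 1)
    (hNK : ¬ ATPaper.IsCompleteK T k) (hk : 5 ≤ k)
    (hSconn : (T.induce S).Connected) (hbg : blocksGood T S)
    (hnc : ∀ v ∈ S, (T.induce (S \ {v})).Preconnected) :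
    ((nd T S : ℝ) ≤ cst k * S.ncard - 2 ∧
      ∀ r ∈ S, free T k S r → (nd T S : ℝ) ≤ cst k * S.ncard - cst k) := by
  have hbS : blockish T S := ⟨hSconn, hnc⟩
  have hSne : S.Nonempty := blockish_nonempty hbS
  have hm1 : 1 ≤ S.ncard := by
    rw [Nat.one_le_iff_ne_zero, ne_eq, Set.ncard_eq_zero]
    exact Set.nonempty_iff_ne_empty.1 hSne
  rcases hbg S subset_rfl hbS
      (fun C h1 h2 _ => subset_antisymm h2 h1) with hcl | ⟨h3, h2⟩
  · -- clique
    obtain ⟨v, hv⟩ := hSne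
    have hd : S.ncard - 1 ≤ k - 1 := by
      rw [← dS_clique hcl hv]
      exact (dS_le_degree S v).trans (hdeg v)
    have hmk : S.ncard ≤ k := by omega
    have hne : S.ncard ≠ k := fun h => no_Kk hTconn hdeg hNK hcl h hk
    have hmk1 : S.ncard ≤ k - 1 := by omega
    have hndS : nd T S = S.ncard * (S.ncard - 1) := nd_clique hcl
    constructor
    · rw [hndS]; exact ineq_cliqueA hk hm1 hmk1
    · intro r hr hfree
      have hmk2 : S.ncard ≤ k - 2 := by
        rcases Nat.lt_or_ge S.ncard (k-1) with h | h
        · omega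
        · exfalso
          have hQ : T.IsNClique (k-1) (sfin S) := by
            constructor
            · rw [coe_sfin]; exact hcl
            · rw [card_sfin]; omega
          exact hfree (sfin S) (by rw [coe_sfin]) hQ (by simpa using hr)
      rw [hndS]; exact ineq_cliqueB hk hm1 hmk2
  · -- odd cycle
    have hndS : nd T S = 2 * S.ncard := by
      apply nd_cycle
      intro v hv
      rw [dS_eq_natCard]
      exact h2 v hv
    constructor
    · rw [hndS]; exact ineq_cycleA hk h3
    · intro r hr hfree
      rw [hndS]; exact ineq_cycleB hk h3

end Main

section MainInd
variable [Fintype V] {T : SimpleGraph V} {k : ℕ} {S : Set V} {x : V}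

lemma deg_of_clique {Q : Finset V} (hQcl : T.IsNClique (k-1) Q) (hxQ : x ∈ Q)
    {S' : Set V} (hQS' : ↑Q ⊆ S') (hk : 5 ≤ k) : k - 2 ≤ dS T S' x := by
  have hsub : Q.erase x ⊆ Finset.univ.filter (fun u => u ∈ S' ∧ T.Adj x u) := by
    intro u hu
    have huQ := Finset.mem_of_mem_erase hu
    have hux := Finset.ne_of_mem_erase hu
    simp only [Finset.mem_filter, Finset.mem_univ, true_and]
    exact ⟨hQS' huQ, hQcl.1 (Finset.mem_coe.2 hxQ) (Finset.mem_coe.2 huQ) (Ne.symm hux)⟩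
  have hcard := Finset.card_le_card hsub
  rw [Finset.card_erase_of_mem hxQ, hQcl.2] at hcard
  have : k - 1 - 1 = k - 2 := by omega
  rw [this] at hcard
  exact hcard

lemma nd_singleton (v : V) : nd T {v} = 0 := by
  have hcl : T.IsClique {v} := by
    rw [SimpleGraph.isClique_iff]; exact Set.pairwise_singleton _ _
  rw [nd_clique hcl, Set.ncard_singleton]

lemma main_ind (hTconn : T.Connected) (hdeg : ∀ v, T.degree v ≤ k - 1)
    (hNK : ¬ ATPaper.IsCompleteK T k) (hk : 5 ≤ k) :
    ∀ N (S : Set V), S.ncard ≤ N → (T.induce S).Connected → blocksGood T S →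
      ((nd T S : ℝ) ≤ cst k * S.ncard - 2 ∧
        ∀ r ∈ S, free T k S r → (nd T S : ℝ) ≤ cst k * S.ncard - cst k) := by
  intro N
  induction N with
  | zero =>
      intro S hcard hSconn _
      exfalso
      have hne : S.Nonempty := by
        have := hSconn.nonempty
        rwa [Set.nonempty_coe_sort] at this
      have := (Set.ncard_pos (Set.toFinite S)).2 hne
      omega
  | succ N IH =>
      intro S hcard hSconn hbg
      by_cases hterm : ∀ v ∈ S, (T.induce (S \ {v})).Preconnected
      · exact terminal hTconn hdeg hNK hk hSconn hbg hterm
      · push_neg at hterm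
        obtain ⟨x, hxS, hcut⟩ := hterm
        have pak : ∀ a b : V, a ∈ S → a ≠ x → b ∈ S → b ≠ x → ¬ ReachIn T (S \ {x}) a b →
            ((nd T S : ℝ) ≤ cst k * S.ncard - 2 ∧
             (∀ r ∈ comp T S x a, free T k S r →
                (nd T S : ℝ) ≤ cst k * S.ncard - cst k) ∧
             (free T k S x → (nd T S : ℝ) ≤ cst k * S.ncard - cst k)) := by
          intro a b haS hax hbS hbx hunreach
          have hbA : b ∉ comp T S x a := hunreach
          have haA : a ∈ comp T S x a := self_mem_comp haS hax
          have hxA : x ∉ comp T S x a := x_not_mem_comp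
          obtain ⟨y, hyA, hxy⟩ := exists_adj_comp hSconn hxS haS hax hbS hbA
          have hS1conn := S1_connected hxS haS hax hyA hxy
          have hS2conn := S2_connected hSconn hxS haS hax (a := a)
          have hbg1 := blocksGood_S1 hbg hxS hyA hxy
          have hbg2 := blocksGood_S2 hbg hSconn hxS haS hax hbS hbx hbA
          have hS1S : insert x (comp T S x a) ⊆ S := by
            rintro z (rfl | hz)
            · exact hxS
            · exact (comp_subset hz).1
          have hS2S : S \ comp T S x a ⊆ S := Set.diff_subset
          have hUnion : insert x (comp T S x a) ∪ (S \ comp T S x a) = S := by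
            apply subset_antisymm
            · exact Set.union_subset hS1S hS2S
            · intro z hz
              by_cases hzA : z ∈ comp T S x a
              · exact Or.inl (Or.inr hzA)
              · exact Or.inr ⟨hz, hzA⟩
          have hI : ∀ z, z ∈ insert x (comp T S x a) → z ∈ S \ comp T S x a → z = x := by
            rintro z (rfl | hz) hz2
            · rfl
            · exact absurd hz hz2.2
          have hedge : ∀ u v, T.Adj u v →
              u ∈ insert x (comp T S x a) ∪ (S \ comp T S x a) →
              v ∈ insert x (comp T S x a) ∪ (S \ comp T S x a) →
              (u ∈ insert x (comp T S x a) ∧ v ∈ insert x (comp T S x a)) ∨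
              (u ∈ S \ comp T S x a ∧ v ∈ S \ comp T S x a) := by
            intro u v hadj hu hv
            rw [hUnion] at hu hv
            by_cases huA : u ∈ comp T S x a
            · by_cases hvx : v = x
              · exact Or.inl ⟨Or.inr huA, Or.inl hvx⟩
              · exact Or.inl ⟨Or.inr huA, Or.inr (comp_closure huA hv hvx hadj)⟩
            · by_cases hvA : v ∈ comp T S x a
              · by_cases hux : u = x
                · exact Or.inl ⟨Or.inl hux, Or.inr hvA⟩
                · exact absurd (comp_closure hvA hu hux hadj.symm) huA
              · exact Or.inr ⟨⟨hu, huA⟩, ⟨hv, hvA⟩⟩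
          have hndS : nd T S = nd T (insert x (comp T S x a)) + nd T (S \ comp T S x a) := by
            have h := nd_split hI hedge
            rwa [hUnion] at h
          have hdSx : dS T S x =
              dS T (insert x (comp T S x a)) x + dS T (S \ comp T S x a) x := by
            have h := dS_split (T := T) hI
            rwa [hUnion] at h
          have hdegx : dS T S x ≤ k - 1 := le_trans (dS_le_degree S x) (hdeg x)
          have hinter : insert x (comp T S x a) ∩ (S \ comp T S x a) = {x} := by
            apply subset_antisymm
            · rintro z ⟨hz1, hz2⟩
              exact hI z hz1 hz2
            · rintro z rfl
              exact ⟨Or.inl rfl, hxS, hxA⟩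
          have hn12 : (insert x (comp T S x a)).ncard + (S \ comp T S x a).ncard
              = S.ncard + 1 := by
            have h := Set.ncard_union_add_ncard_inter (insert x (comp T S x a))
              (S \ comp T S x a) (Set.toFinite _) (Set.toFinite _)
            rw [hUnion, hinter, Set.ncard_singleton] at h
            omega
          have hlt1 : (insert x (comp T S x a)).ncard < S.ncard := by
            apply Set.ncard_lt_ncard _ (Set.toFinite S)
            rw [Set.ssubset_iff_of_subset hS1S]
            refine ⟨b, hbS, ?_⟩
            rintro (rfl | hbA')
            · exact hbx rfl
            · exact hbA hbA'
          have hlt2 : (S \ comp T S x a).ncard < S.ncard := by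
            apply Set.ncard_lt_ncard _ (Set.toFinite S)
            rw [Set.ssubset_iff_of_subset hS2S]
            exact ⟨a, haS, fun h => h.2 haA⟩
          obtain ⟨A1, B1all⟩ := IH (insert x (comp T S x a)) (by omega) hS1conn hbg1
          obtain ⟨A2, B2all⟩ := IH (S \ comp T S x a) (by omega) hS2conn hbg2
          have hxS1 : x ∈ insert x (comp T S x a) := Or.inl rfl
          have hxS2 : x ∈ S \ comp T S x a := ⟨hxS, hxA⟩
          have hnreal : ((insert x (comp T S x a)).ncard : ℝ) + (S \ comp T S x a).ncard
              = (S.ncard : ℝ) + 1 := by exact_mod_cast hn12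
          have hndreal : (nd T S : ℝ) = (nd T (insert x (comp T S x a)) : ℝ)
              + (nd T (S \ comp T S x a) : ℝ) := by exact_mod_cast hndS
          have hsum : cst k * ((insert x (comp T S x a)).ncard : ℝ)
              + cst k * ((S \ comp T S x a).ncard : ℝ)
              = cst k * (S.ncard : ℝ) + cst k := by
            calc cst k * ((insert x (comp T S x a)).ncard : ℝ)
                + cst k * ((S \ comp T S x a).ncard : ℝ)
                = cst k * (((insert x (comp T S x a)).ncard : ℝ)
                  + ((S \ comp T S x a).ncard : ℝ)) := by ring
              _ = cst k * ((S.ncard : ℝ) + 1) := by rw [hnreal]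
              _ = cst k * (S.ncard : ℝ) + cst k := by ring
          have hc3 := cst_ge_three hk
          by_cases hclx : ∃ Q : Finset V, ↑Q ⊆ S ∧ T.IsNClique (k-1) Q ∧ x ∈ Q
          · obtain ⟨Q, hQS, hQcl, hxQ⟩ := hclx
            have hnotfreex : ¬ free T k S x := fun hf => hf Q hQS hQcl hxQ
            have hstrad : (↑Q : Set V) ⊆ insert x (comp T S x a) ∨
                (↑Q : Set V) ⊆ S \ comp T S x a := by
              by_cases hmeet : ∃ q ∈ Q, (q : V) ∈ comp T S x a
              · left
                intro q' hq'
                obtain ⟨q, hqQ, hqA⟩ := hmeet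
                by_cases hq'x : q' = x
                · exact Or.inl hq'x
                by_cases hq'q : q' = q
                · exact Or.inr (hq'q ▸ hqA)
                have hadj : T.Adj q q' :=
                  hQcl.1 (Finset.mem_coe.2 hqQ) hq' (fun h => hq'q h.symm)
                exact Or.inr (comp_closure hqA (hQS hq') hq'x hadj)
              · right
                intro q' hq'
                exact ⟨hQS hq', fun hc => hmeet ⟨q', Finset.mem_coe.1 hq', hc⟩⟩
            rcases hstrad with hQ1 | hQ2
            · -- the clique through x lies in S₁
              have hd1 : k - 2 ≤ dS T (insert x (comp T S x a)) x :=
                deg_of_clique hQcl hxQ hQ1 hk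
              have hd2 : dS T (S \ comp T S x a) x ≤ 1 := by omega
              have hfree2 : free T k (S \ comp T S x a) x := by
                intro Q' h1 h2 h3
                have := deg_of_clique h2 h3 h1 hk
                omega
              have hB2 := B2all x hxS2 hfree2
              refine ⟨by linarith, fun r hrA hfree => ?_, fun hf => absurd hf hnotfreex⟩
              have hB1 := B1all r (Or.inr hrA) (free_mono hS1S hfree)
              linarith
            · -- the clique through x lies in S₂
              have hd2 : k - 2 ≤ dS T (S \ comp T S x a) x :=
                deg_of_clique hQcl hxQ hQ2 hk
              have hd1le : dS T (insert x (comp T S x a)) x ≤ 1 := by omega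
              have hd1ge : 1 ≤ dS T (insert x (comp T S x a)) x := by
                rw [dS, Finset.one_le_card]
                refine ⟨y, ?_⟩
                simp only [Finset.mem_filter, Finset.mem_univ, true_and]
                exact ⟨Or.inr hyA, hxy⟩
              have hfree1 : free T k (insert x (comp T S x a)) x := by
                intro Q' h1 h2 h3
                have := deg_of_clique h2 h3 h1 hk
                omega
              have huniq : ∀ u ∈ insert x (comp T S x a), T.Adj x u → u = y :=
                fun u hu hadj => dS_le_one_unique hd1le hu hadj (Or.inr hyA) hxy
              have hB1 := B1all x hxS1 hfree1
              refine ⟨by linarith, fun r hrA hfree => ?_, fun hf => absurd hf hnotfreex⟩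
              -- the leaf case
              have hrx : r ≠ x := (comp_subset hrA).2
              by_cases hsing : comp T S x a ⊆ {r}
              · have hAr : comp T S x a = {r} :=
                  subset_antisymm hsing (Set.singleton_subset_iff.2 hrA)
                have hyr : y = r := hsing hyA
                have hdr : dS T ({r} : Set V) x = 1 := by
                  apply le_antisymm
                  · calc dS T ({r} : Set V) x
                        ≤ dS T (insert x (comp T S x a)) x :=
                          dS_mono (by rw [hAr]; exact Set.subset_insert _ _) x
                      _ ≤ 1 := hd1le
                  · rw [dS, Finset.one_le_card]
                    refine ⟨r, ?_⟩
                    simp only [Finset.mem_filter, Finset.mem_univ, true_and]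
                    exact ⟨rfl, hyr ▸ hxy⟩
                have hnd1 : nd T (insert x (comp T S x a)) = 2 := by
                  rw [hAr, nd_insert (by simpa [hAr] using hxA), nd_singleton, hdr]
                have hn1 : (insert x (comp T S x a)).ncard = 2 := by
                  rw [hAr, Set.ncard_insert_of_notMem (by simpa [hAr] using hxA),
                    Set.ncard_singleton]
                have hn2' : (S \ comp T S x a).ncard = S.ncard - 1 := by omega
                have hnge : 1 ≤ S.ncard := by
                  have := (Set.ncard_pos (Set.toFinite S)).2 ⟨x, hxS⟩
                  omega
                have hn2real : ((S \ comp T S x a).ncard : ℝ) = (S.ncard : ℝ) - 1 := by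
                  rw [hn2']
                  have : ((S.ncard - 1 : ℕ) : ℝ) = (S.ncard : ℝ) - 1 := by
                    rw [Nat.cast_sub hnge, Nat.cast_one]
                  rw [this]
                have : (nd T S : ℝ) ≤ 2 + (cst k * ((S \ comp T S x a).ncard : ℝ) - 2) := by
                  rw [hndreal, hnd1]
                  push_cast
                  linarith
                rw [hn2real] at this
                linarith
              · obtain ⟨z, hzA, hzr⟩ : ∃ z ∈ comp T S x a, z ≠ r := by
                  rcases Set.not_subset.1 hsing with ⟨z, hz1, hz2⟩
                  exact ⟨z, hz1, hz2⟩
                have h2ex : ∃ z' ∈ comp T S x a, z' ≠ y := by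
                  by_cases hyr : y = r
                  · exact ⟨z, hzA, fun h => hzr (h.symm ▸ hyr ▸ rfl)⟩
                  · exact ⟨r, hrA, fun h => hyr h.symm⟩
                have hbgA := blocksGood_comp hbg hxS hyA huniq h2ex
                have hAconn := comp_connected (T := T) haS hax (x := x)
                have hAsubS : comp T S x a ⊆ S := fun z hz => (comp_subset hz).1
                have hAlt : (comp T S x a).ncard < S.ncard := by
                  apply Set.ncard_lt_ncard _ (Set.toFinite S)
                  rw [Set.ssubset_iff_of_subset hAsubS]
                  exact ⟨x, hxS, hxA⟩
                obtain ⟨AA, AB⟩ := IH (comp T S x a) (by omega) hAconn hbgA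
                have hBr := AB r hrA (free_mono hAsubS hfree)
                have hdA : dS T (comp T S x a) x = 1 := by
                  apply le_antisymm
                  · calc dS T (comp T S x a) x
                        ≤ dS T (insert x (comp T S x a)) x :=
                          dS_mono (Set.subset_insert _ _) x
                      _ ≤ 1 := hd1le
                  · rw [dS, Finset.one_le_card]
                    refine ⟨y, ?_⟩
                    simp only [Finset.mem_filter, Finset.mem_univ, true_and]
                    exact ⟨hyA, hxy⟩
                have hnd1 : nd T (insert x (comp T S x a))
                    = nd T (comp T S x a) + 2 := by
                  rw [nd_insert hxA, hdA]
                have hn1 : (insert x (comp T S x a)).ncard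
                    = (comp T S x a).ncard + 1 := by
                  rw [Set.ncard_insert_of_notMem hxA]
                have hnA : (comp T S x a).ncard + (S \ comp T S x a).ncard = S.ncard := by
                  omega
                have hnAreal : ((comp T S x a).ncard : ℝ)
                    + ((S \ comp T S x a).ncard : ℝ) = (S.ncard : ℝ) := by
                  exact_mod_cast hnA
                have hsumA : cst k * ((comp T S x a).ncard : ℝ)
                    + cst k * ((S \ comp T S x a).ncard : ℝ) = cst k * (S.ncard : ℝ) := by
                  calc cst k * ((comp T S x a).ncard : ℝ)
                      + cst k * ((S \ comp T S x a).ncard : ℝ)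
                      = cst k * (((comp T S x a).ncard : ℝ)
                        + ((S \ comp T S x a).ncard : ℝ)) := by ring
                    _ = cst k * (S.ncard : ℝ) := by rw [hnAreal]
                have hndA : (nd T S : ℝ) = (nd T (comp T S x a) : ℝ) + 2
                    + (nd T (S \ comp T S x a) : ℝ) := by
                  rw [hndreal, hnd1]
                  push_cast
                  ring
                linarith
          · have hfreeSx : free T k S x := fun Q h1 h2 h3 => hclx ⟨Q, h1, h2, h3⟩
            have hB1 := B1all x hxS1 (free_mono hS1S hfreeSx)
            have hB2 := B2all x hxS2 (free_mono hS2S hfreeSx)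
            refine ⟨by linarith, fun r hrA hfree => ?_, fun _ => by linarith⟩
            have hB1r := B1all r (Or.inr hrA) (free_mono hS1S hfree)
            linarith
        obtain ⟨a0, ha0S, ha0x, b0, hb0S, hb0x, hunreach0⟩ := exists_cut_pair hcut
        refine ⟨(pak a0 b0 ha0S ha0x hb0S hb0x hunreach0).1, ?_⟩
        intro r hrS hfree
        by_cases hrx : r = x
        · subst hrx
          exact (pak a0 b0 ha0S ha0x hb0S hb0x hunreach0).2.2 hfree
        · obtain ⟨b, hbS, hbx, hunr⟩ := unreachable_of_cut hcut hrS hrx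
          exact (pak r b hrS hrx hbS hbx hunr).2.1 r (self_mem_comp hrS hrx) hfree

end MainInd
end ATProof

/-- for `k ≥ 5` and `T ∈ 𝒯_k`, `2‖T‖ ≤ (k - 2 + 2/(k-1))·|T| - 2`. -/
theorem stmt_3 {V : Type*} [Fintype V] (k : ℕ) (hk : 5 ≤ k) (T : SimpleGraph V)
    (hT : ATPaper.MemTk T k) :
    2 * (Nat.card T.edgeSet : ℝ) ≤
      ((k : ℝ) - 2 + 2 / ((k : ℝ) - 1)) * (Nat.card V : ℝ) - 2 := by
  classical
  obtain ⟨⟨hconn, hblocks⟩, hdeg', hNK⟩ := hT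
  have hdeg : ∀ v, T.degree v ≤ k - 1 := by
    intro v
    have hset : {u : V | u ∈ Set.univ ∧ T.Adj v u} = T.neighborSet v := by
      ext u; simp [SimpleGraph.mem_neighborSet]
    have h1 : T.degree v = Nat.card (T.neighborSet v) := by
      rw [← ATProof.dS_univ (T := T) v, ATProof.dS_eq_natCard, hset]
    rw [h1]
    exact hdeg' v
  have hbgU : ATProof.blocksGood T Set.univ := by
    intro B _ hBb hBmax
    have hblk : ATPaper.IsBlockSet T B :=
      ⟨hBb.1, hBb.2, fun C h1 h2 h3 => hBmax C h1 (Set.subset_univ C) ⟨h2, h3⟩⟩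
    rcases hblocks B hblk with hcl | hodd
    · exact Or.inl hcl
    · right
      refine ⟨?_, hodd.2.2.2⟩
      have h3 := hodd.2.2.1
      rwa [Nat.card_coe_set_eq] at h3
  have hconnU : (T.induce Set.univ).Connected := by
    rw [ATProof.connected_induce_iff]
    have : Nonempty V := hconn.nonempty
    refine ⟨Set.univ_nonempty, ?_⟩
    intro u _ v _
    obtain ⟨w⟩ := hconn u v
    exact ⟨w, fun z _ => trivial⟩
  have hmain := (ATProof.main_ind hconn hdeg hNK hk (Set.ncard Set.univ) Set.univ
    le_rfl hconnU hbgU).1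
  have h1 : ATProof.nd T Set.univ = 2 * T.edgeFinset.card := ATProof.nd_univ
  have h3 : Nat.card T.edgeSet = T.edgeFinset.card := by
    rw [Nat.card_coe_set_eq, Set.ncard_eq_toFinset_card']
    exact congrArg Finset.card (by ext e; simp)
  have h4 : (2 : ℝ) * (Nat.card T.edgeSet : ℝ) = (ATProof.nd T Set.univ : ℝ) := by
    rw [h1, h3]
    push_cast
    ring
  have h5 : ((Set.univ : Set V).ncard : ℝ) = (Nat.card V : ℝ) := by
    rw [Set.ncard_univ]
  rw [h4]
  have hcst : ATProof.cst k = (k : ℝ) - 2 + 2 / ((k : ℝ) - 1) := rfl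
  rw [← hcst]
  rw [h5] at hmain
  exact hmain
end

section
/- Let k ≥ 5 be an integer and let p, f, h be real numbers such that 2||T|| ≤ (k − 3 + p)·|T| + f + h·q(T) holds for every T ∈ 𝒯_k containing a copy of K_{k−1}. Then p ≥ (3k−5)/(k²−4k+5). -/
open scoped Classical

namespace AT8

/-- Vertex type: `a` "units", each consisting of a big clique `K_{m+4}` (the `inl` part)
and `m+2` small cliques `K_{m+3}` (the `inr` part, indexed by `Fin (m+2)`). -/
abbrev VT (m a : ℕ) := Fin a × (Fin (m+4) ⊕ Fin (m+2) × Fin (m+3))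

variable {m a : ℕ}

/-- Clique identifier. -/
def cid (v : VT m a) : Fin a × Option (Fin (m+2)) :=
  (v.1, Sum.elim (fun _ => (none : Option (Fin (m+2)))) (fun p => some p.1) v.2)

def bigIdx (m : ℕ) (s : Fin (m+2)) : Fin (m+4) := ⟨s.val + 2, by omega⟩

/-- The "link" (matching) relation. -/
def PR (u v : VT m a) : Prop :=
  (u.1.val + 1 = v.1.val ∧ u.2 = Sum.inl 0 ∧ v.2 = Sum.inl 1) ∨
  (v.1.val + 1 = u.1.val ∧ u.2 = Sum.inl 1 ∧ v.2 = Sum.inl 0) ∨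
  (u.1 = v.1 ∧ ∃ s : Fin (m+2), u.2 = Sum.inl (bigIdx m s) ∧ v.2 = Sum.inr (s, 0)) ∨
  (u.1 = v.1 ∧ ∃ s : Fin (m+2), u.2 = Sum.inr (s, 0) ∧ v.2 = Sum.inl (bigIdx m s))

lemma pr_symm {u v : VT m a} (h : PR u v) : PR v u := by
  rcases h with ⟨h1, h2, h3⟩ | ⟨h1, h2, h3⟩ | ⟨h1, s, h2, h3⟩ | ⟨h1, s, h2, h3⟩
  · exact Or.inr (Or.inl ⟨h1, h3, h2⟩)
  · exact Or.inl ⟨h1, h3, h2⟩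
  · exact Or.inr (Or.inr (Or.inr ⟨h1.symm, s, h3, h2⟩))
  · exact Or.inr (Or.inr (Or.inl ⟨h1.symm, s, h3, h2⟩))

lemma pr_cid {u v : VT m a} (h : PR u v) : cid u ≠ cid v := by
  rcases h with ⟨h1, h2, h3⟩ | ⟨h1, h2, h3⟩ | ⟨h1, s, h2, h3⟩ | ⟨h1, s, h2, h3⟩ <;>
    intro hc <;> rw [Prod.ext_iff] at hc <;> simp [cid, h2, h3] at hc <;> omega

lemma pr_ne {u v : VT m a} (h : PR u v) : u ≠ v := fun he => pr_cid h (by rw [he])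

lemma pr_unique {u v w : VT m a} (h1 : PR u v) (h2 : PR u w) : v = w := by
  obtain ⟨i, x⟩ := u; obtain ⟨iv, xv⟩ := v; obtain ⟨iw, xw⟩ := w
  rcases h1 with ⟨a1, b1, c1⟩ | ⟨a1, b1, c1⟩ | ⟨a1, s1, b1, c1⟩ | ⟨a1, s1, b1, c1⟩ <;>
  rcases h2 with ⟨a2, b2, c2⟩ | ⟨a2, b2, c2⟩ | ⟨a2, s2, b2, c2⟩ | ⟨a2, s2, b2, c2⟩ <;>
    simp_all [Prod.ext_iff, Fin.ext_iff, bigIdx, -Fin.val_eq_zero_iff] <;> omega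

/-- The graph. -/
def G (m a : ℕ) : SimpleGraph (VT m a) where
  Adj u v := (cid u = cid v ∧ u ≠ v) ∨ PR u v
  symm := by
    constructor
    intro u v h
    rcases h with ⟨h1, h2⟩ | h
    · exact Or.inl ⟨h1.symm, h2.symm⟩
    · exact Or.inr (pr_symm h)
  loopless := by
    constructor
    intro u h
    rcases h with ⟨_, h2⟩ | h
    · exact h2 rfl
    · exact pr_ne h rfl

lemma adj_iff {u v : VT m a} : (G m a).Adj u v ↔ ((cid u = cid v ∧ u ≠ v) ∨ PR u v) :=
  Iff.rfl



/-- Walk invariant: a set closed under adjacency is closed under reachability. -/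
lemma reach_inv {W : Type*} (H : SimpleGraph W) (S : Set W)
    (hS : ∀ u v, H.Adj u v → (u ∈ S ↔ v ∈ S)) {u v : W} (h : H.Reachable u v) :
    u ∈ S ↔ v ∈ S := by
  obtain ⟨w⟩ := h
  induction w with
  | nil => rfl
  | cons hadj _ ih => exact (hS _ _ hadj).trans ih

lemma fst_eq_of_cid {u v : VT m a} (h : cid u = cid v) : u.1 = v.1 :=
  (Prod.ext_iff.mp h).1

lemma cid_small' {u : VT m a} {i : Fin a} {s : Fin (m+2)} (h : cid u = (i, some s)) :
    u.1 = i ∧ ∃ t, u.2 = Sum.inr (s, t) := by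
  obtain ⟨iu, xu⟩ := u
  rcases xu with j | ⟨s', t⟩
  · simp [cid, Prod.ext_iff] at h
  · simp only [cid, Sum.elim_inr, Prod.mk.injEq, Option.some.injEq] at h
    exact ⟨h.1, t, by rw [h.2]⟩

/-- For every linked pair `x ~ y`, the `y`-side of the corresponding bridge. -/
lemma side {x y : VT m a} (hxy : PR x y) :
    ∃ S : Set (VT m a), y ∈ S ∧ x ∉ S ∧
      (∀ u v : VT m a, (G m a).Adj u v → u ∈ S → v ∉ S → u = y ∧ v = x) ∧
      (∀ u, cid u = cid x → u ∉ S) := by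
  rcases hxy with ⟨a1, b1, c1⟩ | ⟨a1, b1, c1⟩ | ⟨a1, s, b1, c1⟩ | ⟨a1, s, b1, c1⟩
  · -- path forward : x.2 = inl 0, y.2 = inl 1, y.1 = x.1 + 1
    refine ⟨{w | (x.1 : ℕ) < w.1.val}, by simp only [Set.mem_setOf_eq]; omega,
      by simp only [Set.mem_setOf_eq]; omega, ?_, ?_⟩
    · intro u v hadj hu hv
      simp only [Set.mem_setOf_eq, not_lt] at hu hv
      rcases hadj with ⟨hc, hne⟩ | hpr
      · exfalso; have h2 := congrArg Fin.val (fst_eq_of_cid hc); omega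
      · rcases hpr with ⟨a2, b2, c2⟩ | ⟨a2, b2, c2⟩ | ⟨a2, s2, b2, c2⟩ | ⟨a2, s2, b2, c2⟩
        · exfalso; omega
        · exact ⟨Prod.ext_iff.mpr ⟨Fin.ext (by omega), b2.trans c1.symm⟩,
            Prod.ext_iff.mpr ⟨Fin.ext (by omega), c2.trans b1.symm⟩⟩
        · exfalso; have := congrArg Fin.val a2; omega
        · exfalso; have := congrArg Fin.val a2; omega
    · intro u hcu
      have := congrArg Fin.val (fst_eq_of_cid hcu)
      simp only [Set.mem_setOf_eq, not_lt]; omega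
  · -- path backward : x.2 = inl 1, y.2 = inl 0, x.1 = y.1 + 1
    refine ⟨{w | w.1.val < (x.1 : ℕ)}, by simp only [Set.mem_setOf_eq]; omega,
      by simp only [Set.mem_setOf_eq]; omega, ?_, ?_⟩
    · intro u v hadj hu hv
      simp only [Set.mem_setOf_eq, not_lt] at hu hv
      rcases hadj with ⟨hc, hne⟩ | hpr
      · exfalso; have h2 := congrArg Fin.val (fst_eq_of_cid hc); omega
      · rcases hpr with ⟨a2, b2, c2⟩ | ⟨a2, b2, c2⟩ | ⟨a2, s2, b2, c2⟩ | ⟨a2, s2, b2, c2⟩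
        · exact ⟨Prod.ext_iff.mpr ⟨Fin.ext (by omega), b2.trans c1.symm⟩,
            Prod.ext_iff.mpr ⟨Fin.ext (by omega), c2.trans b1.symm⟩⟩
        · exfalso; omega
        · exfalso; have := congrArg Fin.val a2; omega
        · exfalso; have := congrArg Fin.val a2; omega
    · intro u hcu
      have := congrArg Fin.val (fst_eq_of_cid hcu)
      simp only [Set.mem_setOf_eq, not_lt]; omega
  · -- pendant, big to small : x.2 = inl (s+2), y.2 = inr (s,0), x.1 = y.1
    refine ⟨{w | cid w = (y.1, some s)}, by simp [cid, c1], ?_, ?_, ?_⟩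
    · simp only [Set.mem_setOf_eq]
      simp [cid, b1, Prod.ext_iff]
    · intro u v hadj hu hv
      simp only [Set.mem_setOf_eq] at hu hv
      rcases hadj with ⟨hc, hne⟩ | hpr
      · exact absurd (hc.symm.trans hu) hv
      · obtain ⟨hu1, t, hu2⟩ := cid_small' hu
        rcases hpr with ⟨a2, b2, c2⟩ | ⟨a2, b2, c2⟩ | ⟨a2, s2, b2, c2⟩ | ⟨a2, s2, b2, c2⟩
        · exact absurd (hu2.symm.trans b2) (by simp)
        · exact absurd (hu2.symm.trans b2) (by simp)
        · exact absurd (hu2.symm.trans b2) (by simp)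
        · have hinj := hu2.symm.trans b2
          simp only [Sum.inr.injEq, Prod.mk.injEq] at hinj
          obtain ⟨hs, ht⟩ := hinj
          constructor
          · exact Prod.ext_iff.mpr ⟨hu1, by rw [hu2, c1, ht]⟩
          · exact Prod.ext_iff.mpr ⟨(a2.symm.trans hu1).trans a1.symm, by rw [c2, b1, hs]⟩
    · intro u hcu hu
      simp only [Set.mem_setOf_eq] at hu
      rw [hcu] at hu
      simp [cid, b1, Prod.ext_iff] at hu
  · -- pendant, small to big : x.2 = inr (s,0), y.2 = inl (s+2), x.1 = y.1
    refine ⟨{w | cid w ≠ (x.1, some s)}, ?_, ?_, ?_, ?_⟩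
    · simp only [Set.mem_setOf_eq]
      simp [cid, c1, Prod.ext_iff]
    · simp only [Set.mem_setOf_eq, not_not]
      simp [cid, b1]
    · intro u v hadj hu hv
      simp only [Set.mem_setOf_eq, not_not] at hu hv
      rcases hadj with ⟨hc, hne⟩ | hpr
      · exact absurd (hc.trans hv) hu
      · obtain ⟨hv1, t, hv2⟩ := cid_small' hv
        have hpr' := pr_symm hpr
        rcases hpr' with ⟨a2, b2, c2⟩ | ⟨a2, b2, c2⟩ | ⟨a2, s2, b2, c2⟩ | ⟨a2, s2, b2, c2⟩
        · exact absurd (hv2.symm.trans b2) (by simp)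
        · exact absurd (hv2.symm.trans b2) (by simp)
        · exact absurd (hv2.symm.trans b2) (by simp)
        · have hinj := hv2.symm.trans b2
          simp only [Sum.inr.injEq, Prod.mk.injEq] at hinj
          obtain ⟨hs, ht⟩ := hinj
          constructor
          · exact Prod.ext_iff.mpr ⟨(a2.symm.trans hv1).trans a1, by rw [c2, c1, hs]⟩
          · exact Prod.ext_iff.mpr ⟨hv1, by rw [hv2, b1, ht]⟩
    · intro u hcu hu
      simp only [Set.mem_setOf_eq] at hu
      exact hu (hcu.trans (by simp [cid, b1]))


lemma blocks_clique (B : Set (VT m a)) (hc : ((G m a).induce B).Connected)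
    (hnc : ATPaper.NoCutVtx (G m a) B) : (G m a).IsClique B := by
  by_cases hPR : ∃ x ∈ B, ∃ y ∈ B, PR x y
  · obtain ⟨x, hx, y, hy, hxy⟩ := hPR
    obtain ⟨S, hyS, hxS, hcross, -⟩ := side hxy
    have hxy_ne : x ≠ y := pr_ne hxy
    by_cases hz : ∃ z ∈ B, z ≠ x ∧ z ≠ y
    · exfalso
      obtain ⟨z, hzB, hzx, hzy⟩ := hz
      by_cases hzS : z ∈ S
      · have hpre := hnc y hy
        have hx' : x ∈ B \ {y} := ⟨hx, hxy_ne⟩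
        have hz' : z ∈ B \ {y} := ⟨hzB, hzy⟩
        have hreach := hpre ⟨x, hx'⟩ ⟨z, hz'⟩
        have hinv := reach_inv ((G m a).induce (B \ {y})) {p | p.1 ∈ S} ?_ hreach
        · exact hxS (hinv.mpr hzS)
        · rintro ⟨u, hu⟩ ⟨v, hv⟩ hadj
          simp only [Set.mem_setOf_eq]
          constructor
          · intro huS; by_contra hvS
            exact hu.2 (hcross u v hadj huS hvS).1
          · intro hvS; by_contra huS
            exact hv.2 (hcross v u ((G m a).adj_symm hadj) hvS huS).1
      · have hpre := hnc x hx
        have hy' : y ∈ B \ {x} := ⟨hy, fun he => hxy_ne he.symm⟩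
        have hz' : z ∈ B \ {x} := ⟨hzB, hzx⟩
        have hreach := hpre ⟨y, hy'⟩ ⟨z, hz'⟩
        have hinv := reach_inv ((G m a).induce (B \ {x})) {p | p.1 ∈ S} ?_ hreach
        · exact hzS (hinv.mp hyS)
        · rintro ⟨u, hu⟩ ⟨v, hv⟩ hadj
          simp only [Set.mem_setOf_eq]
          constructor
          · intro huS; by_contra hvS
            exact hv.2 (hcross u v hadj huS hvS).2
          · intro hvS; by_contra huS
            exact hu.2 (hcross v u ((G m a).adj_symm hadj) hvS huS).2
    · intro u hu v hv hne
      have hu' : u = x ∨ u = y := by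
        by_contra hcon
        push_neg at hcon
        exact hz ⟨u, hu, hcon⟩
      have hv' : v = x ∨ v = y := by
        by_contra hcon
        push_neg at hcon
        exact hz ⟨v, hv, hcon⟩
      rcases hu' with rfl | rfl <;> rcases hv' with rfl | rfl
      · exact absurd rfl hne
      · exact Or.inr hxy
      · exact Or.inr (pr_symm hxy)
      · exact absurd rfl hne
  · intro u hu v hv hne
    push_neg at hPR
    have hreach := hc.preconnected ⟨u, hu⟩ ⟨v, hv⟩
    have hinv := reach_inv ((G m a).induce B) {p | cid p.1 = cid u} ?_ hreach
    · exact Or.inl ⟨(hinv.mp rfl).symm, hne⟩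
    · rintro ⟨p, hp⟩ ⟨q, hq⟩ hadj
      simp only [Set.mem_setOf_eq]
      rcases hadj with ⟨hcq, -⟩ | hpr
      · rw [show cid p = cid q from hcq]
      · exact absurd (show PR p q from hpr) (hPR p hp q hq)


/-! ### Connectivity -/

lemma adj_same {i : Fin a} {x x' : Fin (m+4) ⊕ Fin (m+2) × Fin (m+3)}
    (hcid : cid (m := m) (i, x) = cid (i, x')) (hne : x ≠ x') :
    (G m a).Adj (i, x) (i, x') :=
  Or.inl ⟨hcid, by simp [Prod.ext_iff, hne]⟩

lemma reach_big_zero (i : Fin a) (j : Fin (m+4)) :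
    (G m a).Reachable (i, Sum.inl j) (i, Sum.inl 0) := by
  by_cases hj : j = 0
  · rw [hj]
  · exact (adj_same (x := Sum.inl j) (x' := Sum.inl 0) rfl
      (fun hcon => hj (Sum.inl.inj hcon))).reachable

lemma reach_col_root (ha : 0 < a) :
    ∀ n (i : Fin a), i.val = n →
      (G m a).Reachable (i, Sum.inl 0) ((⟨0, ha⟩ : Fin a), Sum.inl 0)
  | 0, i, h => by
      have : i = ⟨0, ha⟩ := Fin.ext h
      rw [this]
  | n+1, i, h => by
      have hia := i.isLt
      have h1 : (G m a).Adj (i, Sum.inl 0) (i, Sum.inl 1) :=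
        adj_same rfl (by simp [Fin.ext_iff])
      have h2 : (G m a).Adj (i, Sum.inl 1) ((⟨n, by omega⟩ : Fin a), Sum.inl 0) :=
        Or.inr (Or.inr (Or.inl ⟨by simp; omega, rfl, rfl⟩))
      exact (h1.reachable.trans h2.reachable).trans (reach_col_root ha n ⟨n, by omega⟩ rfl)

lemma reach_root (ha : 0 < a) (v : VT m a) :
    (G m a).Reachable v ((⟨0, ha⟩ : Fin a), Sum.inl 0) := by
  obtain ⟨i, x⟩ := v
  rcases x with j | ⟨s, t⟩
  · exact (reach_big_zero i j).trans (reach_col_root ha i.val i rfl)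
  · have h1 : (G m a).Reachable (i, Sum.inr (s, t)) (i, Sum.inr (s, 0)) := by
      by_cases ht : t = 0
      · rw [ht]
      · refine (adj_same (x := Sum.inr (s, t)) (x' := Sum.inr (s, 0)) rfl
          (fun hcon => ht ?_)).reachable
        exact (Prod.ext_iff.mp (Sum.inr.inj hcon)).2
    have h2 : (G m a).Adj (i, Sum.inl (bigIdx m s)) (i, Sum.inr (s, 0)) :=
      Or.inr (Or.inr (Or.inr (Or.inl ⟨rfl, s, rfl, rfl⟩)))
    exact (h1.trans ((G m a).adj_symm h2).reachable).trans
      ((reach_big_zero i (bigIdx m s)).trans (reach_col_root ha i.val i rfl))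

lemma conn (ha : 0 < a) : (G m a).Connected := by
  have : Nonempty (VT m a) := ⟨((⟨0, ha⟩ : Fin a), Sum.inl 0)⟩
  exact ⟨fun u v => (reach_root ha u).trans (reach_root ha v).symm⟩

/-! ### Counting -/

open Finset in
lemma degree_split (v : VT m a) :
    (G m a).degree v
      = (univ.filter fun u => cid v = cid u ∧ v ≠ u).card
        + (univ.filter fun u => PR v u).card := by
  classical
  have hset : (univ.filter ((G m a).Adj v))
      = (univ.filter fun u => cid v = cid u ∧ v ≠ u) ∪ (univ.filter fun u => PR v u) := by
    ext u
    simp only [Finset.mem_filter, Finset.mem_union, Finset.mem_univ, true_and]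
    exact Iff.rfl
  have hdisj : Disjoint (univ.filter fun u : VT m a => cid v = cid u ∧ v ≠ u)
      (univ.filter fun u => PR v u) := by
    rw [Finset.disjoint_left]
    intro u hu1 hu2
    simp only [Finset.mem_filter] at hu1 hu2
    exact pr_cid hu2.2 hu1.2.1
  rw [SimpleGraph.degree, SimpleGraph.neighborFinset_eq_filter, hset,
    Finset.card_union_of_disjoint hdisj]

open Finset in
lemma fiber_card_big (i : Fin a) (j : Fin (m+4)) :
    (univ.filter fun u : VT m a => cid (i, Sum.inl j) = cid u).card = m + 4 := by
  have himg : (univ.filter fun u : VT m a => cid (i, Sum.inl j) = cid u)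
      = univ.image (fun j' : Fin (m+4) => ((i, Sum.inl j') : VT m a)) := by
    ext ⟨iu, xu⟩
    simp only [Finset.mem_filter, Finset.mem_univ, true_and, Finset.mem_image]
    constructor
    · intro hcid
      rcases xu with j' | ⟨s', t'⟩
      · refine ⟨j', Prod.ext_iff.mpr ⟨?_, rfl⟩⟩
        exact (Prod.ext_iff.mp hcid).1
      · exfalso; simp [cid, Prod.ext_iff] at hcid
    · rintro ⟨j', hj⟩
      rw [← hj]
      rfl
  rw [himg, Finset.card_image_of_injective _ (fun x y hxy => by simpa using hxy),
    card_univ, Fintype.card_fin]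

open Finset in
lemma fiber_card_small (i : Fin a) (s : Fin (m+2)) (t : Fin (m+3)) :
    (univ.filter fun u : VT m a => cid (i, Sum.inr (s, t)) = cid u).card = m + 3 := by
  have himg : (univ.filter fun u : VT m a => cid (i, Sum.inr (s, t)) = cid u)
      = univ.image (fun t' : Fin (m+3) => ((i, Sum.inr (s, t')) : VT m a)) := by
    ext ⟨iu, xu⟩
    simp only [Finset.mem_filter, Finset.mem_univ, true_and, Finset.mem_image]
    constructor
    · intro hcid
      rcases xu with j' | ⟨s', t'⟩
      · exfalso; simp [cid, Prod.ext_iff] at hcid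
      · have h2 := Prod.ext_iff.mp hcid
        simp only [cid, Sum.elim_inr, Option.some.injEq] at h2
        exact ⟨t', Prod.ext_iff.mpr ⟨h2.1, by rw [h2.2]⟩⟩
    · rintro ⟨t', ht⟩
      rw [← ht]
      rfl
  rw [himg, Finset.card_image_of_injective _ (fun x y hxy => by simpa using hxy),
    card_univ, Fintype.card_fin]

open Finset in
lemma pr_card_le (v : VT m a) : (univ.filter fun u => PR v u).card ≤ 1 := by
  refine Finset.card_le_one.mpr ?_
  intro u hu w hw
  simp only [Finset.mem_filter] at hu hw
  exact pr_unique hu.2 hw.2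

open Finset in
lemma pr_card_eq_one {v w : VT m a} (hw : PR v w) :
    (univ.filter fun u => PR v u).card = 1 := by
  have : (univ.filter fun u => PR v u) = {w} := by
    ext u
    simp only [Finset.mem_filter, Finset.mem_univ, true_and, Finset.mem_singleton]
    exact ⟨fun hu => pr_unique hu hw, fun hu => hu ▸ hw⟩
  rw [this, Finset.card_singleton]

open Finset in
lemma pr_card_eq_zero {v : VT m a} (hv : ∀ u, ¬ PR v u) :
    (univ.filter fun u => PR v u).card = 0 := by
  rw [Finset.card_eq_zero]
  ext u
  simp only [Finset.mem_filter, Finset.mem_univ, true_and, Finset.notMem_empty, iff_false]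
  exact hv u


open Finset in
lemma clique_part (v : VT m a) :
    (univ.filter fun u => cid v = cid u ∧ v ≠ u).card
      = (univ.filter fun u => cid v = cid u).card - 1 := by
  have he : (univ.filter fun u => cid v = cid u ∧ v ≠ u)
      = (univ.filter fun u => cid v = cid u).erase v := by
    ext u
    simp only [Finset.mem_filter, Finset.mem_erase, Finset.mem_univ, true_and]
    constructor
    · rintro ⟨h1, h2⟩; exact ⟨fun he2 => h2 he2.symm, h1⟩
    · rintro ⟨h1, h2⟩; exact ⟨h2, fun he2 => h1 he2.symm⟩
  rw [he, Finset.card_erase_of_mem (by simp)]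

open Finset in
lemma pr_big_zero (i : Fin a) :
    (univ.filter fun u => PR ((i, Sum.inl 0) : VT m a) u).card
      = if i.val + 1 < a then 1 else 0 := by
  split_ifs with h
  · exact pr_card_eq_one (w := ((⟨i.val + 1, h⟩ : Fin a), Sum.inl 1))
      (Or.inl ⟨rfl, rfl, rfl⟩)
  · refine pr_card_eq_zero ?_
    intro u hu
    rcases hu with ⟨a2, b2, c2⟩ | ⟨a2, b2, c2⟩ | ⟨a2, s2, b2, c2⟩ | ⟨a2, s2, b2, c2⟩
    · have h2 : i.val + 1 = u.1.val := a2
      have := u.1.isLt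
      omega
    · exact absurd b2 (by simp [Fin.ext_iff])
    · exact absurd b2 (by simp [bigIdx, Fin.ext_iff, -Fin.val_eq_zero_iff])
    · exact absurd b2 (by simp)

open Finset in
lemma pr_big_one (i : Fin a) :
    (univ.filter fun u => PR ((i, Sum.inl 1) : VT m a) u).card
      = if 0 < i.val then 1 else 0 := by
  split_ifs with h
  · exact pr_card_eq_one (w := ((⟨i.val - 1, by have := i.isLt; omega⟩ : Fin a), Sum.inl 0))
      (Or.inr (Or.inl ⟨show i.val - 1 + 1 = i.val by omega, rfl, rfl⟩))
  · refine pr_card_eq_zero ?_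
    intro u hu
    rcases hu with ⟨a2, b2, c2⟩ | ⟨a2, b2, c2⟩ | ⟨a2, s2, b2, c2⟩ | ⟨a2, s2, b2, c2⟩
    · exact absurd b2 (by simp [Fin.ext_iff])
    · have h2 : u.1.val + 1 = i.val := a2
      omega
    · exact absurd b2 (by simp [bigIdx, Fin.ext_iff, -Fin.val_eq_zero_iff])
    · exact absurd b2 (by simp)

open Finset in
lemma pr_big_ge2 (i : Fin a) (j : Fin (m+2)) :
    (univ.filter fun u => PR ((i, Sum.inl j.succ.succ) : VT m a) u).card = 1 := by
  refine pr_card_eq_one (w := (i, Sum.inr (j, 0)))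
    (Or.inr (Or.inr (Or.inl ⟨rfl, j, ?_, rfl⟩)))
  have : j.succ.succ = bigIdx m j := by
    apply Fin.ext
    simp [Fin.val_succ, bigIdx]
  rw [this]

open Finset in
lemma pr_small_zero (i : Fin a) (s : Fin (m+2)) :
    (univ.filter fun u => PR ((i, Sum.inr (s, 0)) : VT m a) u).card = 1 :=
  pr_card_eq_one (w := (i, Sum.inl (bigIdx m s)))
    (Or.inr (Or.inr (Or.inr ⟨rfl, s, rfl, rfl⟩)))

open Finset in
lemma pr_small_pos (i : Fin a) (s : Fin (m+2)) (t : Fin (m+3)) (ht : t ≠ 0) :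
    (univ.filter fun u => PR ((i, Sum.inr (s, t)) : VT m a) u).card = 0 := by
  refine pr_card_eq_zero ?_
  intro u hu
  rcases hu with ⟨a2, b2, c2⟩ | ⟨a2, b2, c2⟩ | ⟨a2, s2, b2, c2⟩ | ⟨a2, s2, b2, c2⟩
  · exact absurd b2 (by simp)
  · exact absurd b2 (by simp)
  · exact absurd b2 (by simp)
  · have h2 := b2
    simp only [Sum.inr.injEq, Prod.mk.injEq] at h2
    exact ht h2.2

open Finset in
lemma sum_deg_big (i : Fin a) :
    ∑ j : Fin (m+4), (G m a).degree (i, Sum.inl j)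
      = (m+4)*(m+3) + (m+2)
        + ((if i.val + 1 < a then 1 else 0) + (if 0 < i.val then 1 else 0)) := by
  have hb0 : (G m a).degree (i, Sum.inl 0)
      = (m+3) + (if i.val + 1 < a then 1 else 0) := by
    rw [degree_split, clique_part, fiber_card_big, pr_big_zero]
    congr 1
  have hb1 : (G m a).degree (i, Sum.inl 1)
      = (m+3) + (if 0 < i.val then 1 else 0) := by
    rw [degree_split, clique_part, fiber_card_big, pr_big_one]
    congr 1
  have hbj : ∀ j : Fin (m+2), (G m a).degree (i, Sum.inl j.succ.succ) = (m+4) := by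
    intro j
    rw [degree_split, clique_part, fiber_card_big, pr_big_ge2]
    omega
  rw [Fin.sum_univ_succ, Fin.sum_univ_succ]
  rw [show Fin.succ (0 : Fin (m+3)) = (1 : Fin (m+4)) from Fin.ext (by simp)]
  rw [hb0, hb1]
  rw [Finset.sum_congr rfl (fun j _ => hbj j), Finset.sum_const, card_univ,
    Fintype.card_fin, smul_eq_mul]
  set A := (if i.val + 1 < a then 1 else 0)
  set B := (if 0 < i.val then 1 else 0)
  ring

open Finset in
lemma sum_deg_small (i : Fin a) :
    ∑ p : Fin (m+2) × Fin (m+3), (G m a).degree (i, Sum.inr p)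
      = (m+2) * ((m+3)*(m+2) + 1) := by
  rw [Fintype.sum_prod_type]
  have hrow : ∀ s : Fin (m+2),
      ∑ t : Fin (m+3), (G m a).degree (i, Sum.inr (s, t)) = (m+3)*(m+2) + 1 := by
    intro s
    have h0 : (G m a).degree (i, Sum.inr (s, 0)) = (m+2) + 1 := by
      rw [degree_split, clique_part, fiber_card_small, pr_small_zero]
      omega
    have ht : ∀ t : Fin (m+2), (G m a).degree (i, Sum.inr (s, t.succ)) = (m+2) := by
      intro t
      rw [degree_split, clique_part, fiber_card_small,
        pr_small_pos i s t.succ (Fin.succ_ne_zero t)]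
      omega
    rw [Fin.sum_univ_succ, h0,
      Finset.sum_congr rfl (fun t _ => ht t), Finset.sum_const, card_univ,
      Fintype.card_fin, smul_eq_mul]
    ring
  rw [Finset.sum_congr rfl (fun s _ => hrow s), Finset.sum_const, card_univ,
    Fintype.card_fin, smul_eq_mul]

open Finset in
lemma sum_ind_one : ∑ i : Fin a, (if i.val + 1 < a then 1 else 0) = a - 1 := by
  have hf : (Finset.range a).filter (fun n => n + 1 < a) = Finset.range (a - 1) := by
    ext n
    simp only [Finset.mem_filter, Finset.mem_range]
    omega
  rw [Fin.sum_univ_eq_sum_range (fun n => if n + 1 < a then 1 else 0) a,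
    Finset.sum_boole, Nat.cast_id, hf, Finset.card_range]

open Finset in
lemma sum_ind_two : ∑ i : Fin a, (if 0 < i.val then 1 else 0) = a - 1 := by
  rcases Nat.eq_zero_or_pos a with rfl | ha
  · simp
  · have hf : (Finset.range a).filter (fun n => 0 < n) = Finset.range a \ {0} := by
      ext n
      simp only [Finset.mem_filter, Finset.mem_range, Finset.mem_sdiff, Finset.mem_singleton]
      omega
    rw [Fin.sum_univ_eq_sum_range (fun n => if 0 < n then 1 else 0) a,
      Finset.sum_boole, Nat.cast_id, hf,
      Finset.card_sdiff_of_subset (by simp [Finset.singleton_subset_iff, Finset.mem_range, ha]),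
      Finset.card_range, Finset.card_singleton]

/-- Per-unit degree total (without the path-link corrections). -/
def bC (m : ℕ) : ℕ := m^3 + 8*m^2 + 25*m + 28

open Finset in
lemma sum_degrees_eq (ha : 0 < a) :
    ∑ v : VT m a, (G m a).degree v = a * (m^3 + 8*m^2 + 25*m + 30) - 2 := by
  rw [Fintype.sum_prod_type]
  have hrow : ∀ i : Fin a,
      ∑ x : Fin (m+4) ⊕ Fin (m+2) × Fin (m+3), (G m a).degree (i, x)
        = bC m
          + ((if i.val + 1 < a then 1 else 0) + (if 0 < i.val then 1 else 0)) := by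
    intro i
    rw [Fintype.sum_sum_type, sum_deg_big, sum_deg_small]
    unfold bC
    set A := (if i.val + 1 < a then 1 else 0)
    set B := (if 0 < i.val then 1 else 0)
    ring
  rw [Finset.sum_congr rfl (fun i _ => hrow i)]
  rw [Finset.sum_add_distrib, Finset.sum_add_distrib, sum_ind_one, sum_ind_two,
    Finset.sum_const, card_univ, Fintype.card_fin, smul_eq_mul]
  have hX : a * (m^3 + 8*m^2 + 25*m + 30) = a * bC m + 2 * a := by
    unfold bC; ring
  rw [hX]
  generalize a * bC m = D
  omega


lemma card_vt : Nat.card (VT m a) = a * (m^2 + 6*m + 10) := by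
  rw [Nat.card_eq_fintype_card]
  rw [Fintype.card_prod, Fintype.card_sum, Fintype.card_prod]
  simp only [Fintype.card_fin]
  ring

lemma edge_count (ha : 0 < a) :
    2 * Nat.card (G m a).edgeSet = a * (m^3 + 8*m^2 + 25*m + 30) - 2 := by
  have h1 : Nat.card (G m a).edgeSet = (G m a).edgeFinset.card := by
    rw [Nat.card_coe_set_eq, Set.ncard_eq_toFinset_card']
    congr 1
  rw [h1, ← SimpleGraph.sum_degrees_eq_twice_card_edges, sum_degrees_eq ha]

lemma degree_le (v : VT m a) : (G m a).degree v ≤ m + 4 := by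
  rw [degree_split]
  obtain ⟨i, x⟩ := v
  rcases x with j | ⟨s, t⟩
  · rw [clique_part, fiber_card_big]
    have := pr_card_le (m := m) (a := a) (i, Sum.inl j)
    omega
  · rw [clique_part, fiber_card_small]
    have := pr_card_le (m := m) (a := a) (i, Sum.inr (s, t))
    omega

lemma ncard_neighbor (v : VT m a) : Nat.card ((G m a).neighborSet v) ≤ m + 4 := by
  classical
  rw [Nat.card_eq_fintype_card]
  rw [SimpleGraph.card_neighborSet_eq_degree]
  exact degree_le v

lemma gallai (ha : 0 < a) : ATPaper.IsGallaiTree (G m a) :=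
  ⟨conn ha, fun B hB => Or.inl (blocks_clique B hB.1 hB.2.1)⟩

lemma not_complete (ha : 0 < a) : ¬ ATPaper.IsCompleteK (G m a) (m+5) := by
  rintro ⟨iso⟩
  have hcard := Fintype.card_congr iso.toEquiv
  rw [Fintype.card_fin, Fintype.card_prod, Fintype.card_sum, Fintype.card_prod] at hcard
  simp only [Fintype.card_fin] at hcard
  set X := m + 4 + (m+2)*(m+3) with hXdef
  have hX : 6*m + 10 ≤ X := by
    rw [hXdef]
    nlinarith [sq_nonneg m]
  have hle : X ≤ a * X := Nat.le_mul_of_pos_left X ha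
  set Z := a * X
  omega

lemma has_clique (ha : 0 < a) : ATPaper.HasClique (G m a) (m+4) := by
  classical
  refine ⟨Finset.univ.image
    (fun j : Fin (m+4) => (((⟨0, ha⟩ : Fin a), Sum.inl j) : VT m a)), ?_, ?_⟩
  · intro u hu v hv hne
    simp only [Finset.coe_image, Set.mem_image, Finset.coe_univ, Set.image_univ,
      Set.mem_range] at hu hv
    obtain ⟨j1, rfl⟩ := hu
    obtain ⟨j2, rfl⟩ := hv
    exact Or.inl ⟨rfl, hne⟩
  · rw [Finset.card_image_of_injective _ (fun x y hxy => by simpa using hxy),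
      Finset.card_univ, Fintype.card_fin]

lemma clique_no_pr {S : Finset (VT m a)} (hS : (G m a).IsNClique (m+4) S)
    {u v : VT m a} (hu : u ∈ S) (hv : v ∈ S) (hpr : PR u v) : False := by
  have hcard : 2 < S.card := by rw [hS.card_eq]; omega
  have hne : u ≠ v := pr_ne hpr
  have : ((S.erase u).erase v).Nonempty := by
    rw [← Finset.card_pos]
    have h1 := Finset.card_erase_of_mem hu
    have h2 : v ∈ S.erase u := Finset.mem_erase.mpr ⟨fun he => hne he.symm, hv⟩
    have h3 := Finset.card_erase_of_mem h2
    omega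
  obtain ⟨w, hw⟩ := this
  have hwv : w ≠ v := (Finset.mem_erase.mp hw).1
  have hwu : w ≠ u := (Finset.mem_erase.mp (Finset.mem_erase.mp hw).2).1
  have hwS : w ∈ S := Finset.mem_of_mem_erase (Finset.mem_of_mem_erase hw)
  have hadj_wu : (G m a).Adj w u := hS.isClique hwS hu hwu
  have hadj_wv : (G m a).Adj w v := hS.isClique hwS hv hwv
  have hcwu : cid w = cid u := by
    rcases hadj_wu with ⟨hc, -⟩ | hpr2
    · exact hc
    · exact absurd (pr_unique hpr (pr_symm hpr2)) (Ne.symm hwv)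
  have hcwv : cid w = cid v := by
    rcases hadj_wv with ⟨hc, -⟩ | hpr2
    · exact hc
    · exact absurd (pr_unique (pr_symm hpr) (pr_symm hpr2)) (Ne.symm hwu)
  exact pr_cid hpr (hcwu.symm.trans hcwv)

lemma clique_in_fiber {S : Finset (VT m a)} (hS : (G m a).IsNClique (m+4) S) :
    ∃ i : Fin a, ∀ v ∈ S, ∃ j : Fin (m+4), v = (i, Sum.inl j) := by
  classical
  have hne : S.Nonempty := by
    rw [← Finset.card_pos, hS.card_eq]; omega
  obtain ⟨v0, hv0⟩ := hne
  have hcid : ∀ v ∈ S, cid v = cid v0 := by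
    intro v hv
    by_cases hvv : v = v0
    · rw [hvv]
    · have hadj := hS.isClique hv hv0 hvv
      rcases hadj with ⟨hc, -⟩ | hpr
      · exact hc
      · exact absurd hpr (fun hp => clique_no_pr hS hv hv0 hp)
  obtain ⟨i0, x0⟩ := v0
  rcases x0 with j0 | ⟨s0, t0⟩
  · refine ⟨i0, fun v hv => ?_⟩
    have hc := hcid v hv
    obtain ⟨iv, xv⟩ := v
    rcases xv with jv | ⟨sv, tv⟩
    · exact ⟨jv, Prod.ext_iff.mpr ⟨(Prod.ext_iff.mp hc).1, rfl⟩⟩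
    · exfalso; simp [cid, Prod.ext_iff] at hc
  · exfalso
    have hsub : S ⊆ Finset.univ.filter
        (fun u : VT m a => cid (i0, Sum.inr (s0, t0)) = cid u) := by
      intro v hv
      simp only [Finset.mem_filter, Finset.mem_univ, true_and]
      exact (hcid v hv).symm
    have hcards := Finset.card_le_card hsub
    rw [hS.card_eq, fiber_card_small] at hcards
    omega

lemma wk_subset (ha : 0 < a) :
    {v : VT m a | v ∈ ATPaper.Wk (G m a) (m+5) ∧ ((G m a).induce {v}ᶜ).Preconnected}
      ⊆ {(((⟨a-1, by omega⟩ : Fin a), Sum.inl 0) : VT m a),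
          (((⟨0, ha⟩ : Fin a), Sum.inl 1) : VT m a)} := by
  rintro v ⟨⟨S, hS, hvS⟩, hpre⟩
  have hS' : (G m a).IsNClique (m+4) S := hS
  obtain ⟨i, hfib⟩ := clique_in_fiber hS'
  obtain ⟨j, rfl⟩ := hfib v hvS
  have hnopr : ∀ y, ¬ PR ((i, Sum.inl j) : VT m a) y := by
    intro y hy
    obtain ⟨Sd, hyS, hxS, hcross, hfibS⟩ := side hy
    obtain ⟨j', hj'⟩ : ∃ j' : Fin (m+4), j' ≠ j := by
      by_cases hj0 : j = 0
      · exact ⟨1, by rw [hj0]; simp [Fin.ext_iff]⟩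
      · exact ⟨0, fun hc => hj0 hc.symm⟩
    have hw_ne : ((i, Sum.inl j') : VT m a) ≠ (i, Sum.inl j) := by
      simp [Prod.ext_iff, hj']
    have hwS : ((i, Sum.inl j') : VT m a) ∉ Sd := hfibS _ rfl
    have hy_ne : y ≠ ((i, Sum.inl j) : VT m a) := fun he => hxS (he ▸ hyS)
    have hreach := hpre ⟨y, Set.mem_compl_singleton_iff.mpr hy_ne⟩
      ⟨((i, Sum.inl j') : VT m a), Set.mem_compl_singleton_iff.mpr hw_ne⟩
    have hinv := reach_inv ((G m a).induce {((i, Sum.inl j) : VT m a)}ᶜ)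
      {p | p.1 ∈ Sd} ?_ hreach
    · exact hwS (hinv.mp hyS)
    · rintro ⟨u1, hu1⟩ ⟨u2, hu2⟩ hadj
      simp only [Set.mem_setOf_eq]
      constructor
      · intro hS1; by_contra hS2
        exact hu2 (by
          rw [(hcross u1 u2 hadj hS1 hS2).2]
          exact Set.mem_singleton _)
      · intro hS2; by_contra hS1
        exact hu1 (by
          rw [(hcross u2 u1 ((G m a).adj_symm hadj) hS2 hS1).2]
          exact Set.mem_singleton _)
  by_cases hj2 : 2 ≤ j.val
  · exfalso
    refine hnopr (i, Sum.inr ((⟨j.val - 2, by have := j.isLt; omega⟩ : Fin (m+2)), 0))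
      (Or.inr (Or.inr (Or.inl ⟨rfl, ⟨j.val - 2, by have := j.isLt; omega⟩, ?_, rfl⟩)))
    have : j = bigIdx m ⟨j.val - 2, by have := j.isLt; omega⟩ := by
      apply Fin.ext
      simp [bigIdx]
      omega
    rw [← this]
  · have hj01 : j.val = 0 ∨ j.val = 1 := by omega
    rcases hj01 with h0 | h1
    · have hi : ¬ (i.val + 1 < a) := by
        intro hlt
        refine hnopr ((⟨i.val + 1, hlt⟩ : Fin a), Sum.inl 1)
          (Or.inl ⟨rfl, ?_, rfl⟩)
        rw [show j = (0 : Fin (m+4)) from Fin.ext (by simpa using h0)]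
      left
      have hieq : i = (⟨a-1, by omega⟩ : Fin a) := Fin.ext (by have := i.isLt; simp; omega)
      rw [hieq, show j = (0 : Fin (m+4)) from Fin.ext (by simpa using h0)]
    · have hi : ¬ (0 < i.val) := by
        intro hlt
        refine hnopr ((⟨i.val - 1, by have := i.isLt; omega⟩ : Fin a), Sum.inl 0)
          (Or.inr (Or.inl ⟨by simp; omega, ?_, rfl⟩))
        rw [show j = (1 : Fin (m+4)) from Fin.ext (by simpa using h1)]
      right
      have hieq : i = (⟨0, ha⟩ : Fin a) := Fin.ext (by simp; omega)
      rw [hieq, show j = (1 : Fin (m+4)) from Fin.ext (by simpa using h1)]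
      exact Set.mem_singleton _

lemma q_le (ha : 0 < a) : ATPaper.qT (G m a) (m+5) ≤ 2 := by
  unfold ATPaper.qT
  rw [Nat.card_coe_set_eq]
  refine le_trans (Set.ncard_le_ncard (wk_subset ha) (Set.toFinite _)) ?_
  refine le_trans (Set.ncard_insert_le _ _) ?_
  rw [Set.ncard_singleton]

lemma memTk (ha : 0 < a) : ATPaper.MemTk (G m a) (m+5) :=
  ⟨gallai ha, fun v => ncard_neighbor v, not_complete ha⟩

end AT8

/-- optimality of `p(k) = (3k-5)/(k²-4k+5)`. -/
theorem stmt_8 (k : ℕ) (hk : 5 ≤ k) (p f h : ℝ)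
    (H : ∀ (W : Type) [Fintype W] (T : SimpleGraph W), ATPaper.MemTk T k →
      ATPaper.HasClique T (k - 1) →
      2 * (Nat.card T.edgeSet : ℝ) ≤
        ((k : ℝ) - 3 + p) * (Nat.card W : ℝ) + f + h * (ATPaper.qT T k : ℝ)) :
    p ≥ (3 * (k : ℝ) - 5) / ((k : ℝ) ^ 2 - 4 * (k : ℝ) + 5) := by
  obtain ⟨m, rfl⟩ : ∃ m, k = m + 5 := ⟨k - 5, by omega⟩
  set D : ℝ := (m:ℝ)^2 + 6*(m:ℝ) + 10 with hDdef
  set N : ℝ := 3*(m:ℝ) + 10 with hNdef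
  set C : ℝ := 2 + f + 2*|h| with hCdef
  have hDpos : 0 < D := by rw [hDdef]; positivity
  have key : ∀ a : ℕ, 0 < a → N * a - C ≤ p * (a * D) := by
    intro a ha
    have hT := H (AT8.VT m a) (AT8.G m a) (AT8.memTk ha) (AT8.has_clique ha)
    have hV : ((Nat.card (AT8.VT m a) : ℕ) : ℝ) = a * D := by
      rw [AT8.card_vt, hDdef]; push_cast; ring
    have hge : 2 ≤ a * (m^3 + 8*m^2 + 25*m + 30) := by
      have h30 : 30 ≤ m^3 + 8*m^2 + 25*m + 30 := Nat.le_add_left _ _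
      have := Nat.le_mul_of_pos_left (m^3 + 8*m^2 + 25*m + 30) ha
      omega
    have hE2 : 2 * ((Nat.card (AT8.G m a).edgeSet : ℕ) : ℝ)
        = ((m:ℝ) + 2) * ((a:ℝ) * D) + N * a - 2 := by
      calc 2 * ((Nat.card (AT8.G m a).edgeSet : ℕ) : ℝ)
          = ((2 * Nat.card (AT8.G m a).edgeSet : ℕ) : ℝ) := by push_cast; ring
        _ = ((a * (m^3 + 8*m^2 + 25*m + 30) - 2 : ℕ) : ℝ) := by
            rw [AT8.edge_count ha]
        _ = (a:ℝ) * ((m:ℝ)^3 + 8*(m:ℝ)^2 + 25*(m:ℝ) + 30) - 2 := by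
            rw [Nat.cast_sub hge]; push_cast; ring
        _ = ((m:ℝ) + 2) * ((a:ℝ) * D) + N * a - 2 := by
            rw [hDdef, hNdef]; ring
    have hq0 : (0:ℝ) ≤ (ATPaper.qT (AT8.G m a) (m+5) : ℝ) := Nat.cast_nonneg _
    have hq2 : ((ATPaper.qT (AT8.G m a) (m+5) : ℝ)) ≤ 2 := by
      exact_mod_cast AT8.q_le ha
    have hhq : h * (ATPaper.qT (AT8.G m a) (m+5) : ℝ) ≤ 2*|h| := by
      calc h * (ATPaper.qT (AT8.G m a) (m+5) : ℝ)
          ≤ |h| * (ATPaper.qT (AT8.G m a) (m+5) : ℝ) :=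
            mul_le_mul_of_nonneg_right (le_abs_self h) hq0
        _ ≤ |h| * 2 := mul_le_mul_of_nonneg_left hq2 (abs_nonneg h)
        _ = 2*|h| := by ring
    rw [hV, hE2] at hT
    have hKcast : ((m + 5 : ℕ) : ℝ) = (m:ℝ) + 5 := by push_cast; ring
    rw [hKcast] at hT
    have hexp : ((m:ℝ) + 5 - 3 + p) * ((a:ℝ) * D)
        = ((m:ℝ) + 2) * ((a:ℝ) * D) + p * ((a:ℝ) * D) := by ring
    rw [hexp] at hT
    rw [hCdef]
    linarith [hhq, hT]
  by_contra hcon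
  push_neg at hcon
  have hden : ((m + 5 : ℕ) : ℝ)^2 - 4*((m + 5 : ℕ) : ℝ) + 5 = D := by
    rw [hDdef]; push_cast; ring
  have hnum : 3*((m + 5 : ℕ) : ℝ) - 5 = N := by
    rw [hNdef]; push_cast; ring
  rw [hnum, hden] at hcon
  -- hcon : p < N / D
  have hTp : 0 < N / D - p := by linarith
  obtain ⟨a, haC⟩ := exists_nat_gt (max 0 (C / ((N / D - p) * D)))
  have hapos : 0 < a := by
    have h0 : (0:ℝ) < a := lt_of_le_of_lt (le_max_left _ _) haC
    exact_mod_cast h0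
  have hka := key a hapos
  have hND : (N / D) * D = N := div_mul_cancel₀ _ (ne_of_gt hDpos)
  have h2 : (N / D - p) * ((a:ℝ) * D) ≤ C := by
    have hexp2 : (N / D - p) * ((a:ℝ) * D) = ((N / D) * D) * a - p * ((a:ℝ) * D) := by
      ring
    rw [hexp2, hND]
    linarith [hka]
  have h3 : C / ((N / D - p) * D) < (a:ℝ) := lt_of_le_of_lt (le_max_right _ _) haC
  have hposTD : 0 < (N / D - p) * D := mul_pos hTp hDpos
  have h4 : C < (a:ℝ) * ((N / D - p) * D) := by
    have := mul_lt_mul_of_pos_right h3 hposTD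
    rwa [div_mul_cancel₀ _ (ne_of_gt hposTD)] at this
  have h5 : (N / D - p) * ((a:ℝ) * D) = (a:ℝ) * ((N / D - p) * D) := by ring
  rw [h5] at h2
  linarith
end
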